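/- arXiv:2010.11440 — 3 statements merged into one kernel-verified Lean document; each statement's English description precedes it below -/
import Mathlib

section
/- For every i in {0,...,m-1} and every w in B_i, it holds that A_i ⊆ N(w) ⊆ A[i-2,i+2]. -/
open SimpleGraph

/-- `c` is a hole (induced cycle on at least 5 vertices) in `G`:
the images of consecutive indices are adjacent, and these are the only adjacencies. -/
def IsHoleEmb {V : Type*} (G : SimpleGraph V) (n : ℕ) (c : ZMod n → V) : Prop :=
  5 ≤ n ∧ Function.Injective c ∧
    ∀ i j : ZMod n, G.Adj (c i) (c j) ↔ (j = i + 1 ∨ i = j + 1)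

/-- The triangle `K₃`. -/
def graphK3 : SimpleGraph (Fin 3) := ⊤

/-- `T₂`: the star `K_{1,3}` with every edge subdivided once. -/
def graphT2 : SimpleGraph (Fin 7) :=
  SimpleGraph.fromRel (fun i j =>
    (i, j) ∈ [((0 : Fin 7), (1 : Fin 7)), (0, 2), (0, 3), (1, 4), (2, 5), (3, 6)])

/-- `X₂`: a 4-cycle `0 1 2 3` with pendant vertices `4, 5, 6` attached at `0, 1, 2`. -/
def graphX2 : SimpleGraph (Fin 7) :=
  SimpleGraph.fromRel (fun i j =>
    (i, j) ∈ [((0 : Fin 7), (1 : Fin 7)), (1, 2), (2, 3), (3, 0), (0, 4), (1, 5), (2, 6)])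

/-- `X₃`: a path `0 1 2 3 4`, a vertex `5` adjacent to `0, 2, 4`, and a pendant `6` at `5`. -/
def graphX3 : SimpleGraph (Fin 7) :=
  SimpleGraph.fromRel (fun i j =>
    (i, j) ∈ [((0 : Fin 7), (1 : Fin 7)), (1, 2), (2, 3), (3, 4), (5, 0), (5, 2), (5, 4), (5, 6)])

/-- The cycle `C_n` on `ZMod n`. -/
def cycleG (n : ℕ) : SimpleGraph (ZMod n) :=
  SimpleGraph.fromRel (fun i j => j = i + 1)

/-- `G` contains an induced copy of `H`. -/
def ContainsInduced {W V : Type*} (H : SimpleGraph W) (G : SimpleGraph V) : Prop :=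
  Nonempty (H ↪g G)

/-- An almost bipartite permutation graph: no induced `K₃`, `T₂`, `X₂`, `X₃`,
nor `C_k` for `k ∈ {5,…,9}`. -/
def AlmostBPG {V : Type*} (G : SimpleGraph V) : Prop :=
  ¬ ContainsInduced graphK3 G ∧ ¬ ContainsInduced graphT2 G ∧
    ¬ ContainsInduced graphX2 G ∧ ¬ ContainsInduced graphX3 G ∧
    ∀ k : ℕ, 5 ≤ k → k ≤ 9 → ¬ ContainsInduced (cycleG k) G

/-- `c` is a shortest hole in `G`. -/
def ShortestHole {V : Type*} (G : SimpleGraph V) (m : ℕ) (c : ZMod m → V) : Prop :=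
  IsHoleEmb G m c ∧ ∀ (n : ℕ) (c' : ZMod n → V), IsHoleEmb G n c' → m ≤ n

/-- `A_i = {v : N(v) ∩ C = {c_{i-1}, c_{i+1}}}`. -/
def Ai {V : Type*} (G : SimpleGraph V) (m : ℕ) (c : ZMod m → V) (i : ZMod m) : Set V :=
  {v | G.neighborSet v ∩ Set.range c = {c (i - 1), c (i + 1)}}

/-- `B_i = {v : N(v) ∩ C = {c_i}}`. -/
def Bi {V : Type*} (G : SimpleGraph V) (m : ℕ) (c : ZMod m → V) (i : ZMod m) : Set V :=
  {v | G.neighborSet v ∩ Set.range c = {c i}}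

/-- `A[i,j] = A_i ∪ B_{i+1} ∪ A_{i+2} ∪ …` for integers `i ≤ j`. -/
def Ablk {V : Type*} (G : SimpleGraph V) (m : ℕ) (c : ZMod m → V) (i j : ℤ) : Set V :=
  {v | ∃ k : ℤ, i ≤ k ∧ k ≤ j ∧
    ((Even (k - i) ∧ v ∈ Ai G m c (k : ZMod m)) ∨ (Odd (k - i) ∧ v ∈ Bi G m c (k : ZMod m)))}

/-- `B[i,j] = B_i ∪ A_{i+1} ∪ B_{i+2} ∪ …` for integers `i ≤ j`. -/
def Bblk {V : Type*} (G : SimpleGraph V) (m : ℕ) (c : ZMod m → V) (i j : ℤ) : Set V :=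
  {v | ∃ k : ℤ, i ≤ k ∧ k ≤ j ∧
    ((Even (k - i) ∧ v ∈ Bi G m c (k : ZMod m)) ∨ (Odd (k - i) ∧ v ∈ Ai G m c (k : ZMod m)))}

/-- `V[i,j] = A[i,j] ∪ B[i,j]`. -/
def Vblk {V : Type*} (G : SimpleGraph V) (m : ℕ) (c : ZMod m → V) (i j : ℤ) : Set V :=
  Ablk G m c i j ∪ Bblk G m c i j

/-- The relation `<_{A_i}`. -/
def ltA {V : Type*} (G : SimpleGraph V) (m : ℕ) (c : ZMod m → V) (i : ZMod m)
    (u u' : V) : Prop :=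
  (∃ w ∈ Bi G m c (i - 2) ∪ Ai G m c (i - 1), G.Adj w u ∧ ¬ G.Adj w u') ∨
  (∃ w ∈ Ai G m c (i + 1) ∪ Bi G m c (i + 2), G.Adj w u' ∧ ¬ G.Adj w u)

/-- The relation `<_{B_i}`. -/
def ltB {V : Type*} (G : SimpleGraph V) (m : ℕ) (c : ZMod m → V) (i : ZMod m)
    (w w' : V) : Prop :=
  (∃ u ∈ Ai G m c (i - 2) ∪ Bi G m c (i - 1), G.Adj u w ∧ ¬ G.Adj u w') ∨
  (∃ u ∈ Bi G m c (i + 1) ∪ Ai G m c (i + 2), G.Adj u w' ∧ ¬ G.Adj u w)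

/-- `r` is a strict linear order on the set `S`. -/
def IsStrictLinearOrderOn {V : Type*} (S : Set V) (r : V → V → Prop) : Prop :=
  (∀ a ∈ S, ¬ r a a) ∧
    (∀ a ∈ S, ∀ b ∈ S, ∀ d ∈ S, r a b → r b d → r a d) ∧
    (∀ a ∈ S, ∀ b ∈ S, a ≠ b → r a b ∨ r b a)

/-- `L` extends `r` on the set `S`. -/
def ExtendsOn {V : Type*} (S : Set V) (r L : V → V → Prop) : Prop :=
  ∀ a ∈ S, ∀ b ∈ S, r a b → L a b

/-- `v` is the maximum of `(S, L)`. -/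
def IsMaxOf {V : Type*} (S : Set V) (L : V → V → Prop) (v : V) : Prop :=
  v ∈ S ∧ ∀ z ∈ S, z ≠ v → L z v

/-- `v` is the minimum of `(S, L)`. -/
def IsMinOf {V : Type*} (S : Set V) (L : V → V → Prop) (v : V) : Prop :=
  v ∈ S ∧ ∀ z ∈ S, z ≠ v → L v z

/-- `v, v'` belong to `S`, `L v v'`, and they are consecutive in `(S, L)`. -/
def ConsecIn {V : Type*} (S : Set V) (L : V → V → Prop) (v v' : V) : Prop :=
  v ∈ S ∧ v' ∈ S ∧ L v v' ∧ ¬ ∃ z ∈ S, L v z ∧ L z v'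

/-- The relation `≺` built from the chosen linear orders `LA i` on `A_i` and `LB i` on `B_i`. -/
def precRel {V : Type*} (G : SimpleGraph V) (m : ℕ) (c : ZMod m → V)
    (LA LB : ZMod m → V → V → Prop) (v v' : V) : Prop :=
  ∃ i : ZMod m,
    ConsecIn (Ai G m c i) (LA i) v v' ∨
    ConsecIn (Bi G m c i) (LB i) v v' ∨
    (IsMaxOf (Ai G m c i) (LA i) v ∧ IsMinOf (Bi G m c (i + 1)) (LB (i + 1)) v') ∨
    (IsMaxOf (Bi G m c i) (LB i) v ∧ IsMinOf (Ai G m c (i + 1)) (LA (i + 1)) v')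

/-- `<_{V'}`: the transitive closure of `≺` restricted to `V'`. -/
def ltOn {V : Type*} (G : SimpleGraph V) (m : ℕ) (c : ZMod m → V)
    (LA LB : ZMod m → V → V → Prop) (V' : Set V) : V → V → Prop :=
  Relation.TransGen (fun a b => a ∈ V' ∧ b ∈ V' ∧ precRel G m c LA LB a b)

/-- The relation `<_cl`. -/
def ltCl {V : Type*} (G : SimpleGraph V) (m : ℕ) (c : ZMod m → V)
    (LA LB : ZMod m → V → V → Prop) (v v' : V) : Prop :=
  ∃ i : ℕ, i < m ∧
    ((v ∈ Ablk G m c ((i : ℤ) - 2) ((i : ℤ) + 2) ∧ v' ∈ Ablk G m c ((i : ℤ) - 2) ((i : ℤ) + 2) ∧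
        ltOn G m c LA LB (Ablk G m c ((i : ℤ) - 2) ((i : ℤ) + 2)) v v') ∨
      (v ∈ Bblk G m c ((i : ℤ) - 2) ((i : ℤ) + 2) ∧ v' ∈ Bblk G m c ((i : ℤ) - 2) ((i : ℤ) + 2) ∧
        ltOn G m c LA LB (Bblk G m c ((i : ℤ) - 2) ((i : ℤ) + 2)) v v'))

/-- `r` is a transitive orientation of `G`. -/
def IsTransOrient {V : Type*} (G : SimpleGraph V) (r : V → V → Prop) : Prop :=
  (∀ v, ¬ r v v) ∧ (∀ a b d, r a b → r b d → r a d) ∧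
    ∀ u v, u ≠ v → ((r u v ∨ r v u) ↔ G.Adj u v)

/-- A permutation graph: both `G` and its complement admit transitive orientations. -/
def IsPermGraph {V : Type*} (G : SimpleGraph V) : Prop :=
  (∃ r, IsTransOrient G r) ∧ ∃ r, IsTransOrient Gᶜ r

/-- A bipartite permutation graph. -/
def IsBPG {V : Type*} (G : SimpleGraph V) : Prop :=
  G.Colorable 2 ∧ IsPermGraph G

/-- `X` is a hole cut of `G`: `G - X` is a bipartite permutation graph. -/
def IsHoleCut {V : Type*} (G : SimpleGraph V) (X : Set V) : Prop :=
  IsBPG (G.induce Xᶜ)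

/-- The adjacency property: for every `u ∈ U`, `N(u)` consists of vertices
consecutive in `(W, r)`. -/
def AdjProperty {V : Type*} (G : SimpleGraph V) (U W : Set V) (r : V → V → Prop) : Prop :=
  ∀ u ∈ U, ∀ w ∈ W, ∀ w' ∈ W, ∀ w'' ∈ W,
    r w w' → r w' w'' → G.Adj u w → G.Adj u w'' → G.Adj u w'

/-- The enclosure property: for `u, u' ∈ U` with `N(u) ⊆ N(u')`, the set `N(u') \ N(u)`
consists of vertices consecutive in `(W, r)`. -/
def EncProperty {V : Type*} (G : SimpleGraph V) (U W : Set V) (r : V → V → Prop) : Prop :=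
  ∀ u ∈ U, ∀ u' ∈ U, G.neighborSet u ∩ W ⊆ G.neighborSet u' ∩ W →
    ∀ w ∈ W, ∀ w' ∈ W, ∀ w'' ∈ W, r w w' → r w' w'' →
      (G.Adj u' w ∧ ¬ G.Adj u w) → (G.Adj u' w'' ∧ ¬ G.Adj u w'') →
        (G.Adj u' w' ∧ ¬ G.Adj u w')

/-- `(U, rU)` and `(W, rW)` form a strong ordering of `U ∪ W`. -/
def StrongOrdering {V : Type*} (G : SimpleGraph V) (U W : Set V)
    (rU rW : V → V → Prop) : Prop :=
  ∀ u ∈ U, ∀ u' ∈ U, ∀ w ∈ W, ∀ w' ∈ W,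
    G.Adj u w' → G.Adj u' w → rU u u' → rW w w' → G.Adj u w ∧ G.Adj u' w'

/-- `S` induces in `G` one of the graphs `K₃, T₂, X₂, X₃, C₅, …, C₉`. -/
def IsForbiddenSet {V : Type*} (G : SimpleGraph V) (S : Set V) : Prop :=
  Nonempty (graphK3 ≃g G.induce S) ∨ Nonempty (graphT2 ≃g G.induce S) ∨
    Nonempty (graphX2 ≃g G.induce S) ∨ Nonempty (graphX3 ≃g G.induce S) ∨
    ∃ k : ℕ, 5 ≤ k ∧ k ≤ 9 ∧ Nonempty (cycleG k ≃g G.induce S)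



/-! ### Auxiliary lemmas -/

section ArithHelpers
variable {m : ℕ}

lemma zmod_intCast_ne_zero (hm : 10 ≤ m) (p : ℤ) (h1 : p ≠ 0) (h2 : -10 < p)
    (h3 : p < 10) : (p : ZMod m) ≠ 0 := by
  intro h
  rw [ZMod.intCast_zmod_eq_zero_iff_dvd] at h
  rcases h with ⟨k, hk⟩
  have hm' : (10 : ℤ) ≤ m := by exact_mod_cast hm
  rcases lt_trichotomy k 0 with h | h | h
  · nlinarith
  · subst h; omega
  · nlinarith

lemma index_ne (hm : 10 ≤ m) {x y : ZMod m} (p : ℤ) (h0 : p ≠ 0) (h2 : -10 < p)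
    (h3 : p < 10) (hxy : y = x + p) : x ≠ y := by
  rintro rfl
  exact zmod_intCast_ne_zero hm p h0 h2 h3 (by linear_combination -hxy)

lemma cast_nat_ne_zero (hm : 10 ≤ m) {a : ℕ} (h1 : 1 ≤ a) (h2 : a < m) :
    ((a : ℕ) : ZMod m) ≠ 0 := by
  intro h
  rw [ZMod.natCast_eq_zero_iff] at h
  rcases h with ⟨k, hk⟩
  rcases k with _ | k <;> simp_all <;> nlinarith

lemma cast_nat_inj (hm : 10 ≤ m) {a b : ℕ} (ha : a < m) (hb : b < m)
    (h : ((a : ℕ) : ZMod m) = b) : a = b := by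
  have h1 := ZMod.val_cast_of_lt ha
  have h2 := ZMod.val_cast_of_lt hb
  rw [h] at h1
  omega

lemma shift_nat_ne (hm : 10 ≤ m) (x : ZMod m) {a : ℕ} (h1 : 1 ≤ a) (h2 : a < m) :
    x + (a : ℕ) ≠ x := by
  intro h
  exact cast_nat_ne_zero hm h1 h2 (by linear_combination h)

lemma shift_nat_inj (hm : 10 ≤ m) (x : ZMod m) {a b : ℕ} (ha : a < m) (hb : b < m)
    (h : x + (a : ℕ) = x + (b : ℕ)) : a = b :=
  cast_nat_inj hm ha hb (by linear_combination h)

lemma cast_m_sub (hm : 10 ≤ m) {k : ℕ} (hk : k ≤ m) :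
    ((m - k : ℕ) : ZMod m) = -(k : ZMod m) := by
  have h : ((m - k : ℕ) : ZMod m) + (k : ZMod m) = 0 := by
    rw [← Nat.cast_add, Nat.sub_add_cancel hk, ZMod.natCast_self]
  linear_combination h

end ArithHelpers

section CHelpers
variable {V : Type*} {G : SimpleGraph V} {m : ℕ} {c : ZMod m → V}

lemma c_adj (hC : ShortestHole G m c) {x y : ZMod m} (hxy : y = x + 1) :
    G.Adj (c x) (c y) := (hC.1.2.2 x y).mpr (Or.inl hxy)

lemma c_not_adj (hm : 10 ≤ m) (hC : ShortestHole G m c) {x y : ZMod m} (p : ℤ)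
    (hp1 : p ≠ 1) (hpm : p ≠ -1) (h2 : -9 < p) (h3 : p < 9) (hxy : y = x + p) :
    ¬ G.Adj (c x) (c y) := by
  rw [hC.1.2.2]
  rintro (h | h)
  · exact zmod_intCast_ne_zero hm (p - 1) (by omega) (by omega) (by omega)
      (by push_cast; linear_combination h - hxy)
  · exact zmod_intCast_ne_zero hm (p + 1) (by omega) (by omega) (by omega)
      (by push_cast; linear_combination - hxy - h)

lemma c_ne (hm : 10 ≤ m) (hC : ShortestHole G m c) {x y : ZMod m} (p : ℤ) (h0 : p ≠ 0)
    (h2 : -10 < p) (h3 : p < 10) (hxy : y = x + p) : c x ≠ c y :=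
  fun h => index_ne hm p h0 h2 h3 hxy (hC.1.2.1 h)

lemma c_adj_nat (hm : 10 ≤ m) (hC : ShortestHole G m c) (x : ZMod m) {a b : ℕ}
    (ha : a ≤ m - 2) (hb : b ≤ m - 2) :
    G.Adj (c (x + (a : ℕ))) (c (x + (b : ℕ))) ↔ (b = a + 1 ∨ a = b + 1) := by
  rw [hC.1.2.2]
  constructor
  · rintro (h | h)
    · left
      have hcast : ((b : ℕ) : ZMod m) = ((a + 1 : ℕ) : ZMod m) := by
        push_cast; linear_combination h
      exact (cast_nat_inj hm (by omega) (by omega) hcast).symm ▸ rfl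
    · right
      have hcast : ((a : ℕ) : ZMod m) = ((b + 1 : ℕ) : ZMod m) := by
        push_cast; linear_combination h
      exact cast_nat_inj hm (by omega) (by omega) hcast
  · rintro (rfl | rfl)
    · left; push_cast; ring
    · right; push_cast; ring

lemma exists_offset (hm : 10 ≤ m) (x y : ZMod m) : ∃ t : ℕ, t < m ∧ y = x + (t : ℕ) := by
  haveI : NeZero m := ⟨by omega⟩
  exact ⟨(y - x).val, ZMod.val_lt _, by rw [ZMod.natCast_zmod_val]; ring⟩

lemma holeEmb_of_fin {L : ℕ} (hL : 5 ≤ L) (f : Fin L → V)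
    (hinj : Function.Injective f)
    (hadj : ∀ a b : Fin L, G.Adj (f a) (f b) ↔
      ((b : ℕ) = (a : ℕ) + 1 ∨ (a : ℕ) = (b : ℕ) + 1 ∨
        ((a : ℕ) = 0 ∧ (b : ℕ) = L - 1) ∨ ((b : ℕ) = 0 ∧ (a : ℕ) = L - 1))) :
    ∃ c' : ZMod L → V, IsHoleEmb G L c' := by
  haveI : NeZero L := ⟨by omega⟩
  haveI : Fact (1 < L) := ⟨by omega⟩
  refine ⟨fun i => f ⟨i.val, i.val_lt⟩, hL, ?_, ?_⟩
  · intro a b h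
    have h2 : a.val = b.val := by
      have := hinj h
      simpa [Fin.ext_iff] using this
    exact ZMod.val_injective L h2
  · have key : ∀ a b : ZMod L, (b = a + 1) ↔
        ((b.val = a.val + 1) ∨ (a.val = L - 1 ∧ b.val = 0)) := by
      intro a b
      constructor
      · rintro rfl
        rw [ZMod.val_add, ZMod.val_one]
        have ha := a.val_lt
        rcases Nat.lt_or_ge (a.val + 1) L with h | h
        · left; exact Nat.mod_eq_of_lt h
        · right
          have he : a.val + 1 = L := by omega
          refine ⟨by omega, ?_⟩
          rw [he, Nat.mod_self]
      · intro h
        apply ZMod.val_injective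
        rw [ZMod.val_add, ZMod.val_one]
        have ha := a.val_lt
        have hb := b.val_lt
        rcases h with h | ⟨h1, h2⟩
        · rw [Nat.mod_eq_of_lt (by omega)]; omega
        · rw [h2, h1, Nat.sub_add_cancel (by omega), Nat.mod_self]
    intro i j
    rw [hadj, key, key]
    have hi := i.val_lt
    have hj := j.val_lt
    simp only [Fin.val_mk]
    constructor <;> intro h <;> omega

lemma no_short_hole (hC : ShortestHole G m c) (hm : 10 ≤ m) {L : ℕ} (hL5 : 5 ≤ L)
    (hLm : L < m) (f : Fin L → V) (hinj : Function.Injective f)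
    (hadj : ∀ a b : Fin L, G.Adj (f a) (f b) ↔
      ((b : ℕ) = (a : ℕ) + 1 ∨ (a : ℕ) = (b : ℕ) + 1 ∨
        ((a : ℕ) = 0 ∧ (b : ℕ) = L - 1) ∨ ((b : ℕ) = 0 ∧ (a : ℕ) = L - 1))) : False := by
  obtain ⟨c', h⟩ := holeEmb_of_fin hL5 f hinj hadj
  exact absurd (hC.2 L c' h) (by omega)

lemma shortcut1 (hm : 10 ≤ m) (hC : ShortestHole G m c) (x : ZMod m) (t : ℕ)
    (ht3 : 3 ≤ t) (ht : t ≤ m - 3) (v : V)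
    (hv0 : G.Adj v (c x)) (hvt : G.Adj v (c (x + (t : ℕ))))
    (hva : ∀ a : ℕ, 0 < a → a < t → ¬ G.Adj v (c (x + (a : ℕ))))
    (hvr : ∀ y, v ≠ c y) : False := by
  set L := t + 2 with hL
  set f : Fin L → V := fun k => if (k : ℕ) = 0 then v else c (x + ((k : ℕ) - 1 : ℕ)) with hf
  have f0 : ∀ k : Fin L, (k : ℕ) = 0 → f k = v := by intro k hk; rw [hf]; dsimp only; rw [if_pos hk]
  have fm : ∀ k : Fin L, (k : ℕ) ≠ 0 → f k = c (x + ((k : ℕ) - 1 : ℕ)) := by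
    intro k hk; rw [hf]; dsimp only; rw [if_neg hk]
  have hv0' : G.Adj v (c (x + ((0 : ℕ) : ZMod m))) := by simpa using hv0
  apply no_short_hole hC hm (L := L) (by omega) (by omega) f
  · intro a b hab
    have ha := a.isLt
    have hb := b.isLt
    by_cases hA : (a : ℕ) = 0 <;> by_cases hB : (b : ℕ) = 0
    · exact Fin.ext (by omega)
    · rw [f0 a hA, fm b hB] at hab
      exact absurd hab (hvr _)
    · rw [fm a hA, f0 b hB] at hab
      exact absurd hab.symm (hvr _)
    · rw [fm a hA, fm b hB] at hab
      have := shift_nat_inj hm x (a := (a:ℕ)-1) (b := (b:ℕ)-1) (by omega) (by omega)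
        (hC.1.2.1 hab)
      exact Fin.ext (by omega)
  · intro a b
    have ha := a.isLt
    have hb := b.isLt
    by_cases hA : (a : ℕ) = 0 <;> by_cases hB : (b : ℕ) = 0
    · rw [f0 a hA, f0 b hB]
      exact iff_of_false (G.irrefl) (by omega)
    · rw [f0 a hA, fm b hB]
      by_cases h1 : (b : ℕ) = 1
      · rw [show ((b:ℕ) - 1 : ℕ) = 0 by omega]
        exact iff_of_true hv0' (by omega)
      · by_cases h2 : (b : ℕ) = t + 1
        · rw [show ((b:ℕ) - 1 : ℕ) = t by omega]
          exact iff_of_true hvt (by omega)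
        · exact iff_of_false (hva _ (by omega) (by omega)) (by omega)
    · rw [fm a hA, f0 b hB, G.adj_comm]
      by_cases h1 : (a : ℕ) = 1
      · rw [show ((a:ℕ) - 1 : ℕ) = 0 by omega]
        exact iff_of_true hv0' (by omega)
      · by_cases h2 : (a : ℕ) = t + 1
        · rw [show ((a:ℕ) - 1 : ℕ) = t by omega]
          exact iff_of_true hvt (by omega)
        · exact iff_of_false (hva _ (by omega) (by omega)) (by omega)
    · rw [fm a hA, fm b hB, c_adj_nat hm hC x (by omega) (by omega)]
      constructor <;> intro h <;> omega

lemma shortcut2 (hm : 10 ≤ m) (hC : ShortestHole G m c) (x : ZMod m) (t : ℕ)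
    (ht2 : 2 ≤ t) (ht : t ≤ m - 4) (w v : V) (hwv : G.Adj w v)
    (hw0 : G.Adj w (c x)) (hvt : G.Adj v (c (x + (t : ℕ))))
    (hwa : ∀ a : ℕ, 1 ≤ a → a ≤ t → ¬ G.Adj w (c (x + (a : ℕ))))
    (hva : ∀ a : ℕ, a < t → ¬ G.Adj v (c (x + (a : ℕ))))
    (hwr : ∀ y, w ≠ c y) (hvr : ∀ y, v ≠ c y) : False := by
  set L := t + 3 with hL
  set f : Fin L → V := fun k =>
    if (k : ℕ) = 0 then w else if (k : ℕ) = t + 2 then v else c (x + ((k : ℕ) - 1 : ℕ)) with hf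
  have f0 : ∀ k : Fin L, (k : ℕ) = 0 → f k = w := by intro k hk; rw [hf]; dsimp only; rw [if_pos hk]
  have f2 : ∀ k : Fin L, (k : ℕ) = t + 2 → f k = v := by
    intro k hk; rw [hf]; dsimp only; rw [if_neg (by omega), if_pos hk]
  have fm : ∀ k : Fin L, (k : ℕ) ≠ 0 → (k : ℕ) ≠ t + 2 → f k = c (x + ((k : ℕ) - 1 : ℕ)) := by
    intro k hk hk2; rw [hf]; dsimp only; rw [if_neg hk, if_neg hk2]
  have hw0' : G.Adj w (c (x + ((0 : ℕ) : ZMod m))) := by simpa using hw0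
  have hva' : ∀ a : ℕ, a < t → ¬ G.Adj v (c (x + (a : ℕ))) := hva
  apply no_short_hole hC hm (L := L) (by omega) (by omega) f
  · intro a b hab
    have ha := a.isLt
    have hb := b.isLt
    by_cases hA : (a : ℕ) = 0 <;> by_cases hB : (b : ℕ) = 0
    · exact Fin.ext (by omega)
    · by_cases hB2 : (b : ℕ) = t + 2
      · rw [f0 a hA, f2 b hB2] at hab
        exact absurd hab (G.ne_of_adj hwv)
      · rw [f0 a hA, fm b hB hB2] at hab
        exact absurd hab (hwr _)
    · by_cases hA2 : (a : ℕ) = t + 2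
      · rw [f2 a hA2, f0 b hB] at hab
        exact absurd hab.symm (G.ne_of_adj hwv)
      · rw [fm a hA hA2, f0 b hB] at hab
        exact absurd hab.symm (hwr _)
    · by_cases hA2 : (a : ℕ) = t + 2 <;> by_cases hB2 : (b : ℕ) = t + 2
      · exact Fin.ext (by omega)
      · rw [f2 a hA2, fm b hB hB2] at hab
        exact absurd hab (hvr _)
      · rw [fm a hA hA2, f2 b hB2] at hab
        exact absurd hab.symm (hvr _)
      · rw [fm a hA hA2, fm b hB hB2] at hab
        have := shift_nat_inj hm x (a := (a:ℕ)-1) (b := (b:ℕ)-1) (by omega) (by omega)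
          (hC.1.2.1 hab)
        exact Fin.ext (by omega)
  · intro a b
    have ha := a.isLt
    have hb := b.isLt
    by_cases hA : (a : ℕ) = 0 <;> by_cases hB : (b : ℕ) = 0
    · rw [f0 a hA, f0 b hB]
      exact iff_of_false (G.irrefl) (by omega)
    · by_cases hB2 : (b : ℕ) = t + 2
      · rw [f0 a hA, f2 b hB2]
        exact iff_of_true hwv (by omega)
      · rw [f0 a hA, fm b hB hB2]
        by_cases h1 : (b : ℕ) = 1
        · rw [show ((b:ℕ) - 1 : ℕ) = 0 by omega]
          exact iff_of_true hw0' (by omega)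
        · exact iff_of_false (hwa _ (by omega) (by omega)) (by omega)
    · by_cases hA2 : (a : ℕ) = t + 2
      · rw [f2 a hA2, f0 b hB]
        exact iff_of_true hwv.symm (by omega)
      · rw [fm a hA hA2, f0 b hB, G.adj_comm]
        by_cases h1 : (a : ℕ) = 1
        · rw [show ((a:ℕ) - 1 : ℕ) = 0 by omega]
          exact iff_of_true hw0' (by omega)
        · exact iff_of_false (hwa _ (by omega) (by omega)) (by omega)
    · by_cases hA2 : (a : ℕ) = t + 2 <;> by_cases hB2 : (b : ℕ) = t + 2
      · rw [f2 a hA2, f2 b hB2]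
        exact iff_of_false (G.irrefl) (by omega)
      · rw [f2 a hA2, fm b hB hB2]
        by_cases h1 : (b : ℕ) = t + 1
        · rw [show ((b:ℕ) - 1 : ℕ) = t by omega]
          exact iff_of_true hvt (by omega)
        · exact iff_of_false (hva' _ (by omega)) (by omega)
      · rw [fm a hA hA2, f2 b hB2, G.adj_comm]
        by_cases h1 : (a : ℕ) = t + 1
        · rw [show ((a:ℕ) - 1 : ℕ) = t by omega]
          exact iff_of_true hvt (by omega)
        · exact iff_of_false (hva' _ (by omega)) (by omega)
      · rw [fm a hA hA2, fm b hB hB2, c_adj_nat hm hC x (by omega) (by omega)]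
        constructor <;> intro h <;> omega

end CHelpers

section ForbiddenHelpers

instance : DecidableRel graphT2.Adj := fun a b =>
  decidable_of_iff _ (SimpleGraph.fromRel_adj _ a b).symm
instance : DecidableRel graphX2.Adj := fun a b =>
  decidable_of_iff _ (SimpleGraph.fromRel_adj _ a b).symm
instance : DecidableRel graphX3.Adj := fun a b =>
  decidable_of_iff _ (SimpleGraph.fromRel_adj _ a b).symm
instance : DecidableRel graphK3.Adj := fun a b =>
  decidable_of_iff (a ≠ b) (by simp [graphK3])

variable {V : Type*} {G : SimpleGraph V}

lemma containsInduced_of_tuple {n : ℕ} (H : SimpleGraph (Fin n)) (f : Fin n → V)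
    (h1 : ∀ a b, H.Adj a b → G.Adj (f a) (f b))
    (h2 : ∀ a b, a ≠ b → ¬ H.Adj a b → ¬ G.Adj (f a) (f b))
    (h3 : ∀ a b, a ≠ b → ¬ H.Adj a b → f a ≠ f b) :
    ContainsInduced H G := by
  classical
  refine ⟨⟨⟨f, ?_⟩, ?_⟩⟩
  · intro a b hfab
    by_contra hab
    by_cases h : H.Adj a b
    · exact G.irrefl (hfab ▸ h1 a b h)
    · exact h3 a b hab h hfab
  · intro a b
    show G.Adj (f a) (f b) ↔ H.Adj a b
    constructor
    · intro hG
      by_contra h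
      have hab : a ≠ b := by rintro rfl; exact G.irrefl hG
      exact h2 a b hab h hG
    · exact h1 a b

lemma no_K3 (h : ¬ ContainsInduced graphK3 G) {x y z : V}
    (hxy : G.Adj x y) (hyz : G.Adj y z) (hxz : G.Adj x z) : False := by
  apply h
  apply containsInduced_of_tuple _ ![x, y, z]
  · intro a b hab
    fin_cases a <;> fin_cases b <;>
      simp only [Matrix.cons_val_zero, Matrix.cons_val_one, Matrix.head_cons,
        Matrix.cons_val_two, Matrix.tail_cons] <;>
      first
        | exact absurd hab (by decide)
        | solve_by_elim [SimpleGraph.Adj.symm]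
  · intro a b hne hnadj
    fin_cases a <;> fin_cases b <;>
      first
        | exact absurd rfl hne
        | exact absurd (by decide) hnadj
  · intro a b hne hnadj
    fin_cases a <;> fin_cases b <;>
      first
        | exact absurd rfl hne
        | exact absurd (by decide) hnadj

lemma no_T2 (hT2 : ¬ ContainsInduced graphT2 G) (x0 x1 x2 x3 x4 x5 x6 : V)
    (a01 : G.Adj x0 x1) (a02 : G.Adj x0 x2) (a03 : G.Adj x0 x3)
    (a14 : G.Adj x1 x4) (a25 : G.Adj x2 x5) (a36 : G.Adj x3 x6)
    (n12 : ¬G.Adj x1 x2) (n13 : ¬G.Adj x1 x3) (n23 : ¬G.Adj x2 x3)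
    (n04 : ¬G.Adj x0 x4) (n05 : ¬G.Adj x0 x5) (n06 : ¬G.Adj x0 x6)
    (n15 : ¬G.Adj x1 x5) (n16 : ¬G.Adj x1 x6)
    (n24 : ¬G.Adj x2 x4) (n26 : ¬G.Adj x2 x6)
    (n34 : ¬G.Adj x3 x4) (n35 : ¬G.Adj x3 x5)
    (n45 : ¬G.Adj x4 x5) (n46 : ¬G.Adj x4 x6) (n56 : ¬G.Adj x5 x6)
    (d12 : x1 ≠ x2) (d13 : x1 ≠ x3) (d23 : x2 ≠ x3)
    (d04 : x0 ≠ x4) (d05 : x0 ≠ x5) (d06 : x0 ≠ x6)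
    (d15 : x1 ≠ x5) (d16 : x1 ≠ x6) (d24 : x2 ≠ x4) (d26 : x2 ≠ x6)
    (d34 : x3 ≠ x4) (d35 : x3 ≠ x5) (d45 : x4 ≠ x5) (d46 : x4 ≠ x6) (d56 : x5 ≠ x6) :
    False := by
  apply hT2
  apply containsInduced_of_tuple _ ![x0,x1,x2,x3,x4,x5,x6]
  · intro a b hab
    fin_cases a <;> fin_cases b <;>
      simp only [Matrix.cons_val_zero, Matrix.cons_val_one, Matrix.head_cons,
        Matrix.cons_val_two, Matrix.tail_cons, Matrix.cons_val_three, Matrix.cons_val_four,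
        Matrix.cons_val_succ] <;>
      first
        | exact absurd hab (by decide)
        | solve_by_elim [SimpleGraph.Adj.symm]
  · intro a b hne hnadj
    fin_cases a <;> fin_cases b <;>
      simp only [Matrix.cons_val_zero, Matrix.cons_val_one, Matrix.head_cons,
        Matrix.cons_val_two, Matrix.tail_cons, Matrix.cons_val_three, Matrix.cons_val_four,
        Matrix.cons_val_succ] <;>
      first
        | exact absurd rfl hne
        | exact absurd (by decide) hnadj
        | assumption
        | (intro hh; solve_by_elim [SimpleGraph.Adj.symm])
  · intro a b hne hnadj
    fin_cases a <;> fin_cases b <;>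
      simp only [Matrix.cons_val_zero, Matrix.cons_val_one, Matrix.head_cons,
        Matrix.cons_val_two, Matrix.tail_cons, Matrix.cons_val_three, Matrix.cons_val_four,
        Matrix.cons_val_succ] <;>
      first
        | exact absurd rfl hne
        | exact absurd (by decide) hnadj
        | assumption
        | solve_by_elim [Ne.symm]

lemma no_X2 (hX2 : ¬ ContainsInduced graphX2 G) (x0 x1 x2 x3 x4 x5 x6 : V)
    (a01 : G.Adj x0 x1) (a12 : G.Adj x1 x2) (a23 : G.Adj x2 x3) (a30 : G.Adj x3 x0)
    (a04 : G.Adj x0 x4) (a15 : G.Adj x1 x5) (a26 : G.Adj x2 x6)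
    (n02 : ¬G.Adj x0 x2) (n05 : ¬G.Adj x0 x5) (n06 : ¬G.Adj x0 x6)
    (n13 : ¬G.Adj x1 x3) (n14 : ¬G.Adj x1 x4) (n16 : ¬G.Adj x1 x6)
    (n24 : ¬G.Adj x2 x4) (n25 : ¬G.Adj x2 x5)
    (n34 : ¬G.Adj x3 x4) (n35 : ¬G.Adj x3 x5) (n36 : ¬G.Adj x3 x6)
    (n45 : ¬G.Adj x4 x5) (n46 : ¬G.Adj x4 x6) (n56 : ¬G.Adj x5 x6)
    (d02 : x0 ≠ x2) (d05 : x0 ≠ x5) (d06 : x0 ≠ x6)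
    (d13 : x1 ≠ x3) (d14 : x1 ≠ x4) (d16 : x1 ≠ x6)
    (d24 : x2 ≠ x4) (d25 : x2 ≠ x5)
    (d34 : x3 ≠ x4) (d35 : x3 ≠ x5) (d36 : x3 ≠ x6)
    (d45 : x4 ≠ x5) (d46 : x4 ≠ x6) (d56 : x5 ≠ x6) : False := by
  apply hX2
  apply containsInduced_of_tuple _ ![x0,x1,x2,x3,x4,x5,x6]
  · intro a b hab
    fin_cases a <;> fin_cases b <;>
      simp only [Matrix.cons_val_zero, Matrix.cons_val_one, Matrix.head_cons,
        Matrix.cons_val_two, Matrix.tail_cons, Matrix.cons_val_three, Matrix.cons_val_four,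
        Matrix.cons_val_succ] <;>
      first
        | exact absurd hab (by decide)
        | solve_by_elim [SimpleGraph.Adj.symm]
  · intro a b hne hnadj
    fin_cases a <;> fin_cases b <;>
      simp only [Matrix.cons_val_zero, Matrix.cons_val_one, Matrix.head_cons,
        Matrix.cons_val_two, Matrix.tail_cons, Matrix.cons_val_three, Matrix.cons_val_four,
        Matrix.cons_val_succ] <;>
      first
        | exact absurd rfl hne
        | exact absurd (by decide) hnadj
        | assumption
        | (intro hh; solve_by_elim [SimpleGraph.Adj.symm])
  · intro a b hne hnadj
    fin_cases a <;> fin_cases b <;>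
      simp only [Matrix.cons_val_zero, Matrix.cons_val_one, Matrix.head_cons,
        Matrix.cons_val_two, Matrix.tail_cons, Matrix.cons_val_three, Matrix.cons_val_four,
        Matrix.cons_val_succ] <;>
      first
        | exact absurd rfl hne
        | exact absurd (by decide) hnadj
        | assumption
        | solve_by_elim [Ne.symm]

lemma no_X3 (hX3 : ¬ ContainsInduced graphX3 G) (x0 x1 x2 x3 x4 x5 x6 : V)
    (a01 : G.Adj x0 x1) (a12 : G.Adj x1 x2) (a23 : G.Adj x2 x3) (a34 : G.Adj x3 x4)
    (a50 : G.Adj x5 x0) (a52 : G.Adj x5 x2) (a54 : G.Adj x5 x4) (a56 : G.Adj x5 x6)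
    (n02 : ¬G.Adj x0 x2) (n03 : ¬G.Adj x0 x3) (n04 : ¬G.Adj x0 x4) (n06 : ¬G.Adj x0 x6)
    (n13 : ¬G.Adj x1 x3) (n14 : ¬G.Adj x1 x4) (n15 : ¬G.Adj x1 x5) (n16 : ¬G.Adj x1 x6)
    (n24 : ¬G.Adj x2 x4) (n26 : ¬G.Adj x2 x6)
    (n35 : ¬G.Adj x3 x5) (n36 : ¬G.Adj x3 x6) (n46 : ¬G.Adj x4 x6)
    (d02 : x0 ≠ x2) (d03 : x0 ≠ x3) (d04 : x0 ≠ x4) (d06 : x0 ≠ x6)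
    (d13 : x1 ≠ x3) (d14 : x1 ≠ x4) (d15 : x1 ≠ x5) (d16 : x1 ≠ x6)
    (d24 : x2 ≠ x4) (d26 : x2 ≠ x6)
    (d35 : x3 ≠ x5) (d36 : x3 ≠ x6) (d46 : x4 ≠ x6) : False := by
  apply hX3
  apply containsInduced_of_tuple _ ![x0,x1,x2,x3,x4,x5,x6]
  · intro a b hab
    fin_cases a <;> fin_cases b <;>
      simp only [Matrix.cons_val_zero, Matrix.cons_val_one, Matrix.head_cons,
        Matrix.cons_val_two, Matrix.tail_cons, Matrix.cons_val_three, Matrix.cons_val_four,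
        Matrix.cons_val_succ] <;>
      first
        | exact absurd hab (by decide)
        | solve_by_elim [SimpleGraph.Adj.symm]
  · intro a b hne hnadj
    fin_cases a <;> fin_cases b <;>
      simp only [Matrix.cons_val_zero, Matrix.cons_val_one, Matrix.head_cons,
        Matrix.cons_val_two, Matrix.tail_cons, Matrix.cons_val_three, Matrix.cons_val_four,
        Matrix.cons_val_succ] <;>
      first
        | exact absurd rfl hne
        | exact absurd (by decide) hnadj
        | assumption
        | (intro hh; solve_by_elim [SimpleGraph.Adj.symm])
  · intro a b hne hnadj
    fin_cases a <;> fin_cases b <;>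
      simp only [Matrix.cons_val_zero, Matrix.cons_val_one, Matrix.head_cons,
        Matrix.cons_val_two, Matrix.tail_cons, Matrix.cons_val_three, Matrix.cons_val_four,
        Matrix.cons_val_succ] <;>
      first
        | exact absurd rfl hne
        | exact absurd (by decide) hnadj
        | assumption
        | solve_by_elim [Ne.symm]

end ForbiddenHelpers

section ABHelpers
variable {V : Type*} {G : SimpleGraph V} {m : ℕ} {c : ZMod m → V}

lemma Bi_adj_iff (hC : ShortestHole G m c) {w : V} {i : ZMod m} (hw : w ∈ Bi G m c i)
    (j : ZMod m) : G.Adj w (c j) ↔ j = i := by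
  have hmem := (Set.ext_iff.mp hw (c i)).mpr rfl
  constructor
  · intro h
    have : c j ∈ G.neighborSet w ∩ Set.range c := ⟨h, ⟨j, rfl⟩⟩
    rw [hw] at this
    exact hC.1.2.1 this
  · rintro rfl
    exact hmem.1

lemma Ai_adj_iff (hC : ShortestHole G m c) {u : V} {i : ZMod m} (hu : u ∈ Ai G m c i)
    (j : ZMod m) : G.Adj u (c j) ↔ (j = i - 1 ∨ j = i + 1) := by
  have hmem1 := (Set.ext_iff.mp hu (c (i - 1))).mpr (Set.mem_insert _ _)
  have hmem2 := (Set.ext_iff.mp hu (c (i + 1))).mpr (Set.mem_insert_iff.mpr (Or.inr rfl))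
  constructor
  · intro h
    have : c j ∈ G.neighborSet u ∩ Set.range c := ⟨h, ⟨j, rfl⟩⟩
    rw [hu] at this
    rcases this with h' | h'
    · exact Or.inl (hC.1.2.1 h')
    · exact Or.inr (hC.1.2.1 h')
  · rintro (rfl | rfl)
    · exact hmem1.1
    · exact hmem2.1

lemma Bi_not_range (hm : 10 ≤ m) (hC : ShortestHole G m c) {w : V} {i : ZMod m}
    (hw : w ∈ Bi G m c i) : ∀ x, w ≠ c x := by
  rintro x rfl
  have h1 : (x + 1 : ZMod m) = i := (Bi_adj_iff hC hw _).mp ((hC.1.2.2 x (x+1)).mpr (Or.inl rfl))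
  have h2 : (x - 1 : ZMod m) = i := (Bi_adj_iff hC hw _).mp ((hC.1.2.2 x (x-1)).mpr (Or.inr (by ring)))
  exact index_ne hm (p := 2) (by norm_num) (by norm_num) (by norm_num)
    (show x + 1 = (x - 1) + ((2:ℤ) : ZMod m) by push_cast; ring) (h2.trans h1.symm)

lemma Ai_range_eq (hm : 10 ≤ m) (hC : ShortestHole G m c) {u : V} {i : ZMod m}
    (hu : u ∈ Ai G m c i) : ∀ x, u = c x → x = i := by
  rintro x rfl
  have h1 : (x + 1 : ZMod m) = i - 1 ∨ (x + 1 : ZMod m) = i + 1 :=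
    (Ai_adj_iff hC hu _).mp ((hC.1.2.2 x (x+1)).mpr (Or.inl rfl))
  have h2 : (x - 1 : ZMod m) = i - 1 ∨ (x - 1 : ZMod m) = i + 1 :=
    (Ai_adj_iff hC hu _).mp ((hC.1.2.2 x (x-1)).mpr (Or.inr (by ring)))
  rcases h1 with h1 | h1
  · rcases h2 with h2 | h2
    · exfalso
      exact zmod_intCast_ne_zero hm 2 (by norm_num) (by norm_num) (by norm_num)
        (by push_cast; linear_combination h1 - h2)
    · exfalso
      exact zmod_intCast_ne_zero hm 4 (by norm_num) (by norm_num) (by norm_num)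
        (by push_cast; linear_combination h1 - h2)
  · linear_combination h1

lemma mem_Bi_of (hC : ShortestHole G m c) {v : V} {j : ZMod m} (hj : G.Adj v (c j))
    (honly : ∀ x, G.Adj v (c x) → x = j) : v ∈ Bi G m c j := by
  apply Set.Subset.antisymm
  · rintro z ⟨hz, x, rfl⟩
    have := honly x hz
    subst this
    rfl
  · rintro z hz
    rcases hz with rfl
    exact ⟨hj, ⟨j, rfl⟩⟩

lemma mem_Ai_of (hC : ShortestHole G m c) {v : V} {j : ZMod m}
    (h1 : G.Adj v (c (j - 1))) (h2 : G.Adj v (c (j + 1)))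
    (honly : ∀ x, G.Adj v (c x) → x = j - 1 ∨ x = j + 1) : v ∈ Ai G m c j := by
  apply Set.Subset.antisymm
  · rintro z ⟨hz, x, rfl⟩
    rcases honly x hz with h | h <;> subst h
    · exact Set.mem_insert _ _
    · exact Set.mem_insert_iff.mpr (Or.inr rfl)
  · rintro z hz
    rcases hz with rfl | rfl
    · exact ⟨h1, ⟨j - 1, rfl⟩⟩
    · exact ⟨h2, ⟨j + 1, rfl⟩⟩

end ABHelpers

theorem Bi_neighborhood_containment {V : Type*} (G : SimpleGraph V) (hconn : G.Connected) (hG : AlmostBPG G)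
    (m : ℕ) (c : ZMod m → V) (hm : 10 ≤ m) (hC : ShortestHole G m c) :
    ∀ i : ℕ, i < m → ∀ w ∈ Bi G m c (i : ZMod m),
      Ai G m c (i : ZMod m) ⊆ G.neighborSet w ∧
        G.neighborSet w ⊆ Ablk G m c ((i : ℤ) - 2) ((i : ℤ) + 2) := by
  obtain ⟨hK3, hT2, hX2, hX3, hCyc⟩ := hG
  intro i hi w hw
  haveI : NeZero m := ⟨by omega⟩
  set I : ZMod m := ((i : ℕ) : ZMod m) with hIdef
  -- basic facts about w
  have hwadjI : G.Adj w (c I) := (Bi_adj_iff hC hw I).mpr rfl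
  have hwnadjc : ∀ x, x ≠ I → ¬ G.Adj w (c x) :=
    fun x hx h => hx ((Bi_adj_iff hC hw x).mp h)
  have hwr : ∀ x, w ≠ c x := Bi_not_range hm hC hw
  constructor
  · -- Part 1 : Ai ⊆ N(w)
    intro u hu
    rw [SimpleGraph.mem_neighborSet]
    by_contra hnadj
    have hur : ∀ x, u ≠ c x := by
      intro x hux
      have hxI : x = I := Ai_range_eq hm hC hu x hux
      subst hxI
      exact hnadj (hux ▸ hwadjI)
    have unadj : ∀ x, x ≠ I - 1 → x ≠ I + 1 → ¬ G.Adj u (c x) := by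
      intro x hx1 hx2 h
      rcases (Ai_adj_iff hC hu x).mp h with h' | h'
      · exact hx1 h'
      · exact hx2 h'
    -- X2 on (c (I-1), c I, c (I+1), u, c (I-2), w, c (I+2))
    have a01 : G.Adj (c (I-1)) (c I) := c_adj hC (by ring)
    have a12 : G.Adj (c I) (c (I+1)) := c_adj hC (by ring)
    have a23 : G.Adj (c (I+1)) u := ((Ai_adj_iff hC hu (I+1)).mpr (Or.inr rfl)).symm
    have a30 : G.Adj u (c (I-1)) := (Ai_adj_iff hC hu (I-1)).mpr (Or.inl rfl)
    have a04 : G.Adj (c (I-1)) (c (I-2)) := (c_adj hC (show I-1 = (I-2)+1 by ring)).symm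
    have a15 : G.Adj (c I) w := hwadjI.symm
    have a26 : G.Adj (c (I+1)) (c (I+2)) := c_adj hC (by ring)
    have hne_m1 : (I - 1 : ZMod m) ≠ I := index_ne hm 1 (by norm_num) (by norm_num) (by norm_num)
      (show I = (I-1) + ((1:ℤ):ZMod m) by push_cast; ring)
    have hne_p1 : (I + 1 : ZMod m) ≠ I := (index_ne hm 1 (by norm_num) (by norm_num) (by norm_num)
      (show I + 1 = I + ((1:ℤ):ZMod m) by push_cast; ring)).symm
    have hne_m2 : (I - 2 : ZMod m) ≠ I := index_ne hm 2 (by norm_num) (by norm_num) (by norm_num)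
      (show I = (I-2) + ((2:ℤ):ZMod m) by push_cast; ring)
    have hne_p2 : (I + 2 : ZMod m) ≠ I := (index_ne hm 2 (by norm_num) (by norm_num) (by norm_num)
      (show I + 2 = I + ((2:ℤ):ZMod m) by push_cast; ring)).symm
    refine no_X2 hX2 (c (I-1)) (c I) (c (I+1)) u (c (I-2)) w (c (I+2))
      a01 a12 a23 a30 a04 a15 a26
      ?_ ?_ ?_ ?_ ?_ ?_ ?_ ?_ ?_ ?_ ?_ ?_ ?_ ?_
      ?_ ?_ ?_ ?_ ?_ ?_ ?_ ?_ ?_ ?_ ?_ ?_ ?_ ?_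
    · exact c_not_adj hm hC 2 (by norm_num) (by norm_num) (by norm_num) (by norm_num)
        (show I+1 = (I-1) + ((2:ℤ):ZMod m) by push_cast; ring)
    · exact fun h => hwnadjc (I-1) hne_m1 h.symm
    · exact c_not_adj hm hC 3 (by norm_num) (by norm_num) (by norm_num) (by norm_num)
        (show I+2 = (I-1) + ((3:ℤ):ZMod m) by push_cast; ring)
    · refine fun h => unadj I ?_ ?_ h.symm
      · exact hne_m1.symm
      · exact hne_p1.symm
    · exact c_not_adj hm hC (-2) (by norm_num) (by norm_num) (by norm_num) (by norm_num)
        (show I-2 = I + ((-2:ℤ):ZMod m) by push_cast; ring)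
    · exact c_not_adj hm hC 2 (by norm_num) (by norm_num) (by norm_num) (by norm_num)
        (show I+2 = I + ((2:ℤ):ZMod m) by push_cast; ring)
    · exact c_not_adj hm hC (-3) (by norm_num) (by norm_num) (by norm_num) (by norm_num)
        (show I-2 = (I+1) + ((-3:ℤ):ZMod m) by push_cast; ring)
    · exact fun h => hwnadjc (I+1) hne_p1 h.symm
    · refine unadj (I-2) ?_ ?_
      · exact index_ne hm 1 (by norm_num) (by norm_num) (by norm_num)
          (show I-1 = (I-2) + ((1:ℤ):ZMod m) by push_cast; ring)
      · exact index_ne hm 3 (by norm_num) (by norm_num) (by norm_num)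
          (show I+1 = (I-2) + ((3:ℤ):ZMod m) by push_cast; ring)
    · exact fun h => hnadj h.symm
    · refine unadj (I+2) ?_ ?_
      · exact (index_ne hm 3 (by norm_num) (by norm_num) (by norm_num)
          (show I+2 = (I-1) + ((3:ℤ):ZMod m) by push_cast; ring)).symm
      · exact (index_ne hm 1 (by norm_num) (by norm_num) (by norm_num)
          (show I+2 = (I+1) + ((1:ℤ):ZMod m) by push_cast; ring)).symm
    · exact fun h => hwnadjc (I-2) hne_m2 h.symm
    · exact c_not_adj hm hC 4 (by norm_num) (by norm_num) (by norm_num) (by norm_num)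
        (show I+2 = (I-2) + ((4:ℤ):ZMod m) by push_cast; ring)
    · exact hwnadjc (I+2) hne_p2
    · exact c_ne hm hC 2 (by norm_num) (by norm_num) (by norm_num)
        (show I+1 = (I-1) + ((2:ℤ):ZMod m) by push_cast; ring)
    · exact (hwr (I-1)).symm
    · exact c_ne hm hC 3 (by norm_num) (by norm_num) (by norm_num)
        (show I+2 = (I-1) + ((3:ℤ):ZMod m) by push_cast; ring)
    · exact (hur I).symm
    · exact c_ne hm hC (-2) (by norm_num) (by norm_num) (by norm_num)
        (show I-2 = I + ((-2:ℤ):ZMod m) by push_cast; ring)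
    · exact c_ne hm hC 2 (by norm_num) (by norm_num) (by norm_num)
        (show I+2 = I + ((2:ℤ):ZMod m) by push_cast; ring)
    · exact c_ne hm hC (-3) (by norm_num) (by norm_num) (by norm_num)
        (show I-2 = (I+1) + ((-3:ℤ):ZMod m) by push_cast; ring)
    · exact (hwr (I+1)).symm
    · exact hur (I-2)
    · intro h
      exact hwnadjc (I-1) hne_m1 (h ▸ a30)
    · exact hur (I+2)
    · exact (hwr (I-2)).symm
    · exact c_ne hm hC 4 (by norm_num) (by norm_num) (by norm_num)
        (show I+2 = (I-2) + ((4:ℤ):ZMod m) by push_cast; ring)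
    · exact hwr (I+2)
  · -- Part 2 : N(w) ⊆ A[i-2, i+2]
    intro v hv
    rw [SimpleGraph.mem_neighborSet] at hv
    by_cases hvc' : ∃ x, v = c x
    · -- v on the hole: then v = c I ∈ A_I
      obtain ⟨x, rfl⟩ := hvc'
      have hxI : x = I := (Bi_adj_iff hC hw x).mp hv
      subst hxI
      refine ⟨(i : ℤ), by omega, by omega, Or.inl ⟨⟨1, by ring⟩, ?_⟩⟩
      have hcast : (((i : ℤ) : ℤ) : ZMod m) = I := by push_cast; rfl
      rw [hcast]
      refine mem_Ai_of hC ?_ ?_ ?_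
      · exact (c_adj hC (show I = (I-1)+1 by ring)).symm
      · exact c_adj hC rfl
      · intro x h
        rcases (hC.1.2.2 I x).mp h with h' | h'
        · exact Or.inr h'
        · exact Or.inl (by linear_combination -h')
    · push_neg at hvc'
      classical
      -- P t : v is adjacent to c (I + t)
      have hP0 : ¬ G.Adj v (c (I + ((0:ℕ) : ZMod m))) := by
        intro h
        have hvi : G.Adj v (c I) := by simpa using h
        exact no_K3 hK3 hv hvi hwadjI
      have hPP : ∀ a : ℕ, G.Adj v (c (I + (a:ℕ))) → ¬ G.Adj v (c (I + ((a+1:ℕ) : ZMod m))) := by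
        intro a ha hb
        exact no_K3 hK3 ha
          (c_adj hC (show (I + ((a+1:ℕ) : ZMod m)) = (I + (a:ℕ)) + 1 by push_cast; ring)) hb
      -- G1
      have hG1 : ∀ t : ℕ, 2 ≤ t → t ≤ m - 4 → G.Adj v (c (I + (t:ℕ))) →
          (∀ a : ℕ, 1 ≤ a → a < t → ¬ G.Adj v (c (I + (a:ℕ)))) → False := by
        intro t h2 h4 hPt hhole
        refine shortcut2 hm hC I t h2 h4 w v hv ?_ hPt ?_ ?_ hwr hvc'
        · exact hwadjI
        · intro a h1 hat
          exact hwnadjc _ (shift_nat_ne hm I h1 (by omega))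
        · intro a hat
          rcases Nat.eq_zero_or_pos a with rfl | hpos
          · exact hP0
          · exact hhole a hpos hat
      -- G2
      have hG2 : ∀ t t' : ℕ, 1 ≤ t → t < t' → t' ≤ m - 1 → G.Adj v (c (I + (t:ℕ))) →
          G.Adj v (c (I + (t':ℕ))) → (∀ a : ℕ, t < a → a < t' → ¬ G.Adj v (c (I + (a:ℕ)))) →
          (t' = t + 2 ∨ (t = 1 ∧ t' = m - 1)) := by
        intro t t' h1 htt h9 hPt hPt' hhole
        by_contra hcon
        push_neg at hcon
        have hd : t' - t = 1 ∨ (3 ≤ t' - t ∧ t' - t ≤ m - 3) ∨ t' - t = m - 2 := by omega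
        rcases hd with hd | hd | hd
        · exact hPP t hPt (by rw [show t + 1 = t' by omega]; exact hPt')
        · refine shortcut1 hm hC (I + (t:ℕ)) (t' - t) (by omega) (by omega) v hPt ?_ ?_ hvc'
          · have he : (I + (t:ℕ)) + ((t' - t : ℕ) : ZMod m) = I + (t' : ℕ) := by
              rw [add_assoc, ← Nat.cast_add]
              congr 2
              omega
            rw [he]
            exact hPt'
          · intro a h0 hat
            have he : (I + (t:ℕ)) + ((a : ℕ) : ZMod m) = I + ((t + a : ℕ) : ZMod m) := by
              rw [add_assoc, ← Nat.cast_add]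
            rw [he]
            exact hhole (t + a) (by omega) (by omega)
        · omega
      by_cases hex : ∃ t : ℕ, 1 ≤ t ∧ t ≤ m - 1 ∧ G.Adj v (c (I + (t:ℕ)))
      · -- v has neighbours on the hole
        have spec := Nat.find_spec hex
        set t0 := Nat.find hex with ht0def
        have hmin : ∀ a : ℕ, 1 ≤ a → a ≤ m - 1 → G.Adj v (c (I + (a:ℕ))) → t0 ≤ a :=
          fun a h1 h2 hPa => le_of_not_gt (fun hlt => Nat.find_min hex hlt ⟨h1, h2, hPa⟩)
        have hex' : ∃ s : ℕ, 1 ≤ s ∧ s ≤ m - 1 ∧ G.Adj v (c (I + ((m - s : ℕ) : ZMod m))) :=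
          ⟨m - t0, by omega, by omega, by rw [show m - (m - t0) = t0 by omega]; exact spec.2.2⟩
        have spec' := Nat.find_spec hex'
        set s0 := Nat.find hex' with hs0def
        have hmax : ∀ a : ℕ, 1 ≤ a → a ≤ m - 1 → G.Adj v (c (I + (a:ℕ))) → a ≤ m - s0 := by
          intro a h1 h2 hPa
          have hle : s0 ≤ m - a := le_of_not_gt fun hlt => Nat.find_min hex' hlt
            ⟨by omega, by omega, by rw [show m - (m - a) = a by omega]; exact hPa⟩
          omega
        have ht0 : t0 = 1 ∨ m - 3 ≤ t0 := by
          by_contra hcon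
          push_neg at hcon
          exact hG1 t0 (by omega) (by omega) spec.2.2
            (fun a h1 hat => fun hPa => Nat.find_min hex hat ⟨h1, by omega, hPa⟩)
        have hs0 : s0 = 1 ∨ m - 3 ≤ s0 := by
          by_contra hcon
          push_neg at hcon
          refine shortcut2 hm hC (I + ((m - s0 : ℕ) : ZMod m)) s0 (by omega) (by omega)
            v w hv.symm spec'.2.2 ?_ ?_ ?_ hvc' hwr
          · have he : (I + ((m - s0:ℕ) : ZMod m)) + ((s0:ℕ) : ZMod m) = I := by
              rw [add_assoc, ← Nat.cast_add, show m - s0 + s0 = m by omega,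
                ZMod.natCast_self, add_zero]
            rw [he]
            exact hwadjI
          · intro a h1 ha
            have he : (I + ((m - s0:ℕ):ZMod m)) + ((a:ℕ):ZMod m)
                = I + ((m - s0 + a : ℕ) : ZMod m) := by
              rw [add_assoc, ← Nat.cast_add]
            rw [he]
            rcases eq_or_lt_of_le ha with rfl | hlt
            · rw [show m - s0 + s0 = m by omega]
              intro hadj
              apply hP0
              have he2 : I + ((m:ℕ) : ZMod m) = I + ((0:ℕ) : ZMod m) := by simp
              rw [← he2]
              exact hadj
            · intro hPa
              exact Nat.find_min hex' (show s0 - a < s0 by omega)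
                ⟨by omega, by omega,
                  by rw [show m - (s0 - a) = m - s0 + a by omega]; exact hPa⟩
          · intro a ha
            have he : (I + ((m - s0:ℕ):ZMod m)) + ((a:ℕ):ZMod m)
                = I + ((m - s0 + a : ℕ) : ZMod m) := by
              rw [add_assoc, ← Nat.cast_add]
            rw [he]
            exact hwnadjc _ (shift_nat_ne hm I (by omega) (by omega))
        have htle : t0 ≤ m - s0 := hmax t0 spec.1 spec.2.1 spec.2.2
        -- the final case analysis
        rcases ht0 with ht01 | ht0big
        · -- t0 = 1
          have hP1 : G.Adj v (c (I + ((1:ℕ) : ZMod m))) := by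
            rw [← ht01]; exact spec.2.2
          rcases hs0 with hs01 | hs0big
          · -- s0 = 1, so P (m-1)
            have hPm1 : G.Adj v (c (I + ((m - 1 : ℕ) : ZMod m))) := by
              rw [show m - 1 = m - s0 by omega]; exact spec'.2.2
            by_cases hmid : ∃ a : ℕ, 2 ≤ a ∧ a ≤ m - 2 ∧ G.Adj v (c (I + (a:ℕ)))
            · -- ladder: 3, 5, 7 ∈ T, contradiction with X3
              exfalso
              have specm := Nat.find_spec hmid
              set t' := Nat.find hmid with ht'def
              have hstep1 := hG2 1 t' (le_refl 1) (by omega) (by omega) hP1 specm.2.2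
                (fun a ha1 ha2 => fun hPa => Nat.find_min hmid ha2 ⟨by omega, by omega, hPa⟩)
              have ht'3 : t' = 3 := by omega
              have hP3 : G.Adj v (c (I + ((3:ℕ) : ZMod m))) := by rw [← ht'3]; exact specm.2.2
              have hex5 : ∃ a : ℕ, 4 ≤ a ∧ a ≤ m - 1 ∧ G.Adj v (c (I + (a:ℕ))) :=
                ⟨m - 1, by omega, by omega, hPm1⟩
              have spec5 := Nat.find_spec hex5
              set t5 := Nat.find hex5 with ht5def
              have hstep2 := hG2 3 t5 (by omega) (by omega) (by omega) hP3 spec5.2.2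
                (fun a ha1 ha2 => fun hPa => Nat.find_min hex5 ha2 ⟨by omega, by omega, hPa⟩)
              have ht55 : t5 = 5 := by omega
              have hP5 : G.Adj v (c (I + ((5:ℕ) : ZMod m))) := by rw [← ht55]; exact spec5.2.2
              have hex7 : ∃ a : ℕ, 6 ≤ a ∧ a ≤ m - 1 ∧ G.Adj v (c (I + (a:ℕ))) :=
                ⟨m - 1, by omega, by omega, hPm1⟩
              have spec7 := Nat.find_spec hex7
              set t7 := Nat.find hex7 with ht7def
              have hstep3 := hG2 5 t7 (by omega) (by omega) (by omega) hP5 spec7.2.2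
                (fun a ha1 ha2 => fun hPa => Nat.find_min hex7 ha2 ⟨by omega, by omega, hPa⟩)
              have ht77 : t7 = 7 := by omega
              have hP7 : G.Adj v (c (I + ((7:ℕ) : ZMod m))) := by rw [← ht77]; exact spec7.2.2
              have hnP2 : ¬ G.Adj v (c (I + ((2:ℕ) : ZMod m))) := hPP 1 hP1
              have hnP4 : ¬ G.Adj v (c (I + ((4:ℕ) : ZMod m))) := hPP 3 hP3
              -- X3 on (c(I+1), c(I+2), c(I+3), c(I+4), c(I+5), v, c(I+7))
              refine no_X3 hX3 (c (I + ((1:ℕ):ZMod m))) (c (I + ((2:ℕ):ZMod m)))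
                (c (I + ((3:ℕ):ZMod m))) (c (I + ((4:ℕ):ZMod m))) (c (I + ((5:ℕ):ZMod m)))
                v (c (I + ((7:ℕ):ZMod m)))
                ?_ ?_ ?_ ?_ hP1 hP3 hP5 hP7
                ?_ ?_ ?_ ?_ ?_ ?_ ?_ ?_ ?_ ?_ ?_ ?_ ?_
                ?_ ?_ ?_ ?_ ?_ ?_ ?_ ?_ ?_ ?_ ?_ ?_ ?_
              · exact c_adj hC (by push_cast; ring)
              · exact c_adj hC (by push_cast; ring)
              · exact c_adj hC (by push_cast; ring)
              · exact c_adj hC (by push_cast; ring)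
              · exact c_not_adj hm hC 2 (by norm_num) (by norm_num) (by norm_num) (by norm_num)
                  (by push_cast; ring)
              · exact c_not_adj hm hC 3 (by norm_num) (by norm_num) (by norm_num) (by norm_num)
                  (by push_cast; ring)
              · exact c_not_adj hm hC 4 (by norm_num) (by norm_num) (by norm_num) (by norm_num)
                  (by push_cast; ring)
              · exact c_not_adj hm hC 6 (by norm_num) (by norm_num) (by norm_num) (by norm_num)
                  (by push_cast; ring)
              · exact c_not_adj hm hC 2 (by norm_num) (by norm_num) (by norm_num) (by norm_num)
                  (by push_cast; ring)
              · exact c_not_adj hm hC 3 (by norm_num) (by norm_num) (by norm_num) (by norm_num)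
                  (by push_cast; ring)
              · exact fun h => hnP2 h.symm
              · exact c_not_adj hm hC 5 (by norm_num) (by norm_num) (by norm_num) (by norm_num)
                  (by push_cast; ring)
              · exact c_not_adj hm hC 2 (by norm_num) (by norm_num) (by norm_num) (by norm_num)
                  (by push_cast; ring)
              · exact c_not_adj hm hC 4 (by norm_num) (by norm_num) (by norm_num) (by norm_num)
                  (by push_cast; ring)
              · exact fun h => hnP4 h.symm
              · exact c_not_adj hm hC 3 (by norm_num) (by norm_num) (by norm_num) (by norm_num)
                  (by push_cast; ring)
              · exact c_not_adj hm hC 2 (by norm_num) (by norm_num) (by norm_num) (by norm_num)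
                  (by push_cast; ring)
              · exact c_ne hm hC 2 (by norm_num) (by norm_num) (by norm_num) (by push_cast; ring)
              · exact c_ne hm hC 3 (by norm_num) (by norm_num) (by norm_num) (by push_cast; ring)
              · exact c_ne hm hC 4 (by norm_num) (by norm_num) (by norm_num) (by push_cast; ring)
              · exact c_ne hm hC 6 (by norm_num) (by norm_num) (by norm_num) (by push_cast; ring)
              · exact c_ne hm hC 2 (by norm_num) (by norm_num) (by norm_num) (by push_cast; ring)
              · exact c_ne hm hC 3 (by norm_num) (by norm_num) (by norm_num) (by push_cast; ring)
              · exact (hvc' _).symm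
              · exact c_ne hm hC 5 (by norm_num) (by norm_num) (by norm_num) (by push_cast; ring)
              · exact c_ne hm hC 2 (by norm_num) (by norm_num) (by norm_num) (by push_cast; ring)
              · exact c_ne hm hC 4 (by norm_num) (by norm_num) (by norm_num) (by push_cast; ring)
              · exact (hvc' _).symm
              · exact c_ne hm hC 3 (by norm_num) (by norm_num) (by norm_num) (by push_cast; ring)
              · exact c_ne hm hC 2 (by norm_num) (by norm_num) (by norm_num) (by push_cast; ring)
            · -- no middle: v ∈ A_I
              push_neg at hmid
              refine ⟨(i : ℤ), by omega, by omega, Or.inl ⟨⟨1, by ring⟩, ?_⟩⟩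
              have hcast : (((i : ℤ) : ℤ) : ZMod m) = I := by push_cast; rfl
              rw [hcast]
              refine mem_Ai_of hC ?_ ?_ ?_
              · have he : I + ((m-1:ℕ) : ZMod m) = I - 1 := by
                  rw [cast_m_sub hm (by omega)]; push_cast; ring
                rw [← he]; exact hPm1
              · have he : I + ((1:ℕ) : ZMod m) = I + 1 := by push_cast; ring
                rw [← he]; exact hP1
              · intro x h
                obtain ⟨t, htm, rfl⟩ := exists_offset hm I x
                have hcases : t = 0 ∨ t = 1 ∨ (2 ≤ t ∧ t ≤ m - 2) ∨ t = m - 1 := by omega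
                rcases hcases with rfl | rfl | ⟨h2, h2'⟩ | rfl
                · exact absurd h hP0
                · right; push_cast; ring
                · exact absurd h (hmid t h2 h2')
                · left; rw [cast_m_sub hm (by omega)]; push_cast; ring
          · -- s0 ≥ m - 3, i.e. m - s0 ∈ {1,2,3}
            have hms : m - s0 = 1 ∨ m - s0 = 2 ∨ m - s0 = 3 := by omega
            rcases hms with hms | hms | hms
            · -- T = {1} : v ∈ B_{I+1}
              refine ⟨(i : ℤ) + 1, by omega, by omega, Or.inr ⟨⟨1, by ring⟩, ?_⟩⟩
              have hcast : (((i : ℤ) + 1 : ℤ) : ZMod m) = I + 1 := by push_cast; ring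
              rw [hcast]
              refine mem_Bi_of hC ?_ ?_
              · have he : I + ((1:ℕ) : ZMod m) = I + 1 := by push_cast; ring
                rw [← he]; exact hP1
              · intro x h
                obtain ⟨t, htm, rfl⟩ := exists_offset hm I x
                rcases Nat.eq_zero_or_pos t with rfl | hpos
                · exact absurd h hP0
                · have := hmax t hpos (by omega) h
                  have ht1 : t = 1 := by omega
                  subst ht1
                  push_cast
                  ring
            · -- P 1 and P 2 : triangle, impossible
              exfalso
              have hP2 : G.Adj v (c (I + ((2:ℕ) : ZMod m))) := by
                rw [show (2:ℕ) = m - s0 by omega]; exact spec'.2.2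
              exact hPP 1 hP1 hP2
            · -- T = {1,3} : v ∈ A_{I+2}
              have hP3 : G.Adj v (c (I + ((3:ℕ) : ZMod m))) := by
                rw [show (3:ℕ) = m - s0 by omega]; exact spec'.2.2
              have hnP2 : ¬ G.Adj v (c (I + ((2:ℕ) : ZMod m))) := hPP 1 hP1
              refine ⟨(i : ℤ) + 2, by omega, by omega, Or.inl ⟨⟨2, by ring⟩, ?_⟩⟩
              have hcast : (((i : ℤ) + 2 : ℤ) : ZMod m) = I + 2 := by push_cast; ring
              rw [hcast]
              refine mem_Ai_of hC ?_ ?_ ?_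
              · have he : I + ((1:ℕ) : ZMod m) = I + 2 - 1 := by push_cast; ring
                rw [← he]; exact hP1
              · have he : I + ((3:ℕ) : ZMod m) = I + 2 + 1 := by push_cast; ring
                rw [← he]; exact hP3
              · intro x h
                obtain ⟨t, htm, rfl⟩ := exists_offset hm I x
                rcases Nat.eq_zero_or_pos t with rfl | hpos
                · exact absurd h hP0
                · have hle3 := hmax t hpos (by omega) h
                  have ht13 : t = 1 ∨ t = 2 ∨ t = 3 := by omega
                  rcases ht13 with rfl | rfl | rfl
                  · left; push_cast; ring
                  · exact absurd h hnP2
                  · right; push_cast; ring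
        · -- t0 ≥ m - 3
          have hts : t0 = m - 3 ∨ t0 = m - 2 ∨ t0 = m - 1 := by omega
          rcases hts with hts | hts | hts
          · -- T = {m-3, m-1} : v ∈ A_{I-2}
            have hPm3 : G.Adj v (c (I + ((m - 3 : ℕ) : ZMod m))) := by
              rw [← hts]; exact spec.2.2
            have hs01 : s0 = 1 := by
              rcases hs0 with h | h
              · exact h
              · omega
            have hPm1 : G.Adj v (c (I + ((m - 1 : ℕ) : ZMod m))) := by
              rw [show m - 1 = m - s0 by omega]; exact spec'.2.2
            have hnPm2 : ¬ G.Adj v (c (I + ((m - 2 : ℕ) : ZMod m))) := by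
              have := hPP (m - 3) hPm3
              rw [show m - 3 + 1 = m - 2 by omega] at this
              exact this
            refine ⟨(i : ℤ) - 2, by omega, by omega, Or.inl ⟨⟨0, by ring⟩, ?_⟩⟩
            have hcast : (((i : ℤ) - 2 : ℤ) : ZMod m) = I - 2 := by push_cast; ring
            rw [hcast]
            refine mem_Ai_of hC ?_ ?_ ?_
            · have he : I + ((m - 3:ℕ) : ZMod m) = I - 2 - 1 := by
                rw [cast_m_sub hm (by omega)]; push_cast; ring
              rw [← he]; exact hPm3
            · have he : I + ((m - 1:ℕ) : ZMod m) = I - 2 + 1 := by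
                rw [cast_m_sub hm (by omega)]; push_cast; ring
              rw [← he]; exact hPm1
            · intro x h
              obtain ⟨t, htm, rfl⟩ := exists_offset hm I x
              rcases Nat.eq_zero_or_pos t with rfl | hpos
              · exact absurd h hP0
              · have hge := hmin t hpos (by omega) h
                have htc : t = m - 3 ∨ t = m - 2 ∨ t = m - 1 := by omega
                rcases htc with rfl | rfl | rfl
                · left; rw [cast_m_sub hm (by omega)]; push_cast; ring
                · exact absurd h hnPm2
                · right; rw [cast_m_sub hm (by omega)]; push_cast; ring
          · -- t0 = m - 2 : impossible
            exfalso
            have hPm2 : G.Adj v (c (I + ((m - 2 : ℕ) : ZMod m))) := by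
              rw [← hts]; exact spec.2.2
            have hs01 : s0 = 1 := by
              rcases hs0 with h | h
              · exact h
              · omega
            have hPm1 : G.Adj v (c (I + ((m - 1 : ℕ) : ZMod m))) := by
              rw [show m - 1 = m - s0 by omega]; exact spec'.2.2
            have := hPP (m - 2) hPm2
            rw [show m - 2 + 1 = m - 1 by omega] at this
            exact this hPm1
          · -- T = {m-1} : v ∈ B_{I-1}
            have hPm1 : G.Adj v (c (I + ((m - 1 : ℕ) : ZMod m))) := by
              rw [← hts]; exact spec.2.2
            refine ⟨(i : ℤ) - 1, by omega, by omega, Or.inr ⟨⟨0, by ring⟩, ?_⟩⟩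
            have hcast : (((i : ℤ) - 1 : ℤ) : ZMod m) = I - 1 := by push_cast; ring
            rw [hcast]
            refine mem_Bi_of hC ?_ ?_
            · have he : I + ((m - 1:ℕ) : ZMod m) = I - 1 := by
                rw [cast_m_sub hm (by omega)]; push_cast; ring
              rw [← he]; exact hPm1
            · intro x h
              obtain ⟨t, htm, rfl⟩ := exists_offset hm I x
              rcases Nat.eq_zero_or_pos t with rfl | hpos
              · exact absurd h hP0
              · have hge := hmin t hpos (by omega) h
                have htl : t = m - 1 := by omega
                subst htl
                rw [cast_m_sub hm (by omega)]
                push_cast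
                ring
      · -- v has no neighbour on the hole: T2
        exfalso
        push_neg at hex
        have hnone : ∀ x, ¬ G.Adj v (c x) := by
          intro x h
          obtain ⟨t, htm, rfl⟩ := exists_offset hm I x
          rcases Nat.eq_zero_or_pos t with rfl | hpos
          · exact hP0 h
          · exact hex t hpos (by omega) h
        have hne_m1 : (I - 1 : ZMod m) ≠ I := index_ne hm 1 (by norm_num) (by norm_num)
          (by norm_num) (show I = (I-1) + ((1:ℤ):ZMod m) by push_cast; ring)
        have hne_p1 : (I + 1 : ZMod m) ≠ I := (index_ne hm 1 (by norm_num) (by norm_num)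
          (by norm_num) (show I + 1 = I + ((1:ℤ):ZMod m) by push_cast; ring)).symm
        have hne_m2 : (I - 2 : ZMod m) ≠ I := index_ne hm 2 (by norm_num) (by norm_num)
          (by norm_num) (show I = (I-2) + ((2:ℤ):ZMod m) by push_cast; ring)
        have hne_p2 : (I + 2 : ZMod m) ≠ I := (index_ne hm 2 (by norm_num) (by norm_num)
          (by norm_num) (show I + 2 = I + ((2:ℤ):ZMod m) by push_cast; ring)).symm
        refine no_T2 hT2 (c I) (c (I-1)) (c (I+1)) w (c (I-2)) (c (I+2)) v
          ?_ ?_ ?_ ?_ ?_ ?_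
          ?_ ?_ ?_ ?_ ?_ ?_ ?_ ?_ ?_ ?_ ?_ ?_ ?_ ?_ ?_
          ?_ ?_ ?_ ?_ ?_ ?_ ?_ ?_ ?_ ?_ ?_ ?_ ?_ ?_ ?_
        · exact (c_adj hC (show I = (I-1)+1 by ring)).symm
        · exact c_adj hC rfl
        · exact hwadjI.symm
        · exact (c_adj hC (show I-1 = (I-2)+1 by ring)).symm
        · exact c_adj hC (show I+2 = (I+1)+1 by ring)
        · exact hv
        · exact c_not_adj hm hC 2 (by norm_num) (by norm_num) (by norm_num) (by norm_num)
            (show I+1 = (I-1) + ((2:ℤ):ZMod m) by push_cast; ring)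
        · exact fun h => hwnadjc (I-1) hne_m1 h.symm
        · exact fun h => hwnadjc (I+1) hne_p1 h.symm
        · exact c_not_adj hm hC (-2) (by norm_num) (by norm_num) (by norm_num) (by norm_num)
            (show I-2 = I + ((-2:ℤ):ZMod m) by push_cast; ring)
        · exact c_not_adj hm hC 2 (by norm_num) (by norm_num) (by norm_num) (by norm_num)
            (show I+2 = I + ((2:ℤ):ZMod m) by push_cast; ring)
        · exact fun h => hnone I h.symm
        · exact c_not_adj hm hC 3 (by norm_num) (by norm_num) (by norm_num) (by norm_num)
            (show I+2 = (I-1) + ((3:ℤ):ZMod m) by push_cast; ring)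
        · exact fun h => hnone (I-1) h.symm
        · exact c_not_adj hm hC (-3) (by norm_num) (by norm_num) (by norm_num) (by norm_num)
            (show I-2 = (I+1) + ((-3:ℤ):ZMod m) by push_cast; ring)
        · exact fun h => hnone (I+1) h.symm
        · exact hwnadjc (I-2) hne_m2
        · exact hwnadjc (I+2) hne_p2
        · exact c_not_adj hm hC 4 (by norm_num) (by norm_num) (by norm_num) (by norm_num)
            (show I+2 = (I-2) + ((4:ℤ):ZMod m) by push_cast; ring)
        · exact fun h => hnone (I-2) h.symm
        · exact fun h => hnone (I+2) h.symm
        · exact c_ne hm hC 2 (by norm_num) (by norm_num) (by norm_num)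
            (show I+1 = (I-1) + ((2:ℤ):ZMod m) by push_cast; ring)
        · exact (hwr (I-1)).symm
        · exact (hwr (I+1)).symm
        · exact c_ne hm hC (-2) (by norm_num) (by norm_num) (by norm_num)
            (show I-2 = I + ((-2:ℤ):ZMod m) by push_cast; ring)
        · exact c_ne hm hC 2 (by norm_num) (by norm_num) (by norm_num)
            (show I+2 = I + ((2:ℤ):ZMod m) by push_cast; ring)
        · exact (hvc' I).symm
        · exact c_ne hm hC 3 (by norm_num) (by norm_num) (by norm_num)
            (show I+2 = (I-1) + ((3:ℤ):ZMod m) by push_cast; ring)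
        · exact (hvc' (I-1)).symm
        · exact c_ne hm hC (-3) (by norm_num) (by norm_num) (by norm_num)
            (show I-2 = (I+1) + ((-3:ℤ):ZMod m) by push_cast; ring)
        · exact (hvc' (I+1)).symm
        · exact hwr (I-2)
        · exact hwr (I+2)
        · exact c_ne hm hC 4 (by norm_num) (by norm_num) (by norm_num)
            (show I+2 = (I-2) + ((4:ℤ):ZMod m) by push_cast; ring)
        · exact (hvc' (I-2)).symm
        · exact (hvc' (I+2)).symm
end

section
/- Let i be in {0,...,m-1} and let (i±2,i±1) denote either (i-2,i-1) or (i+2,i+1). For every w,w' in B_{i±2} ∪ A_{i±1}, the sets N(w) ∩ A_i and N(w') ∩ A_i are comparable under inclusion. Moreover, if w in B_{i±2} and w' in A_{i±1}, then N(w) ∩ A_i ⊆ N(w') ∩ A_i. -/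
open SimpleGraph

section Helpers

variable {V : Type*} {G : SimpleGraph V}

private instance cycDec (n : ℕ) : DecidableRel (cycleG n).Adj := fun a b =>
  decidable_of_iff _ (SimpleGraph.fromRel_adj _ a b).symm
private instance cycDec6 (a b : Fin 6) : Decidable ((cycleG 6).Adj a b) := cycDec 6 a b
private instance x3Dec : DecidableRel graphX3.Adj := fun a b =>
  decidable_of_iff _ (SimpleGraph.fromRel_adj _ a b).symm
private instance k3Dec : DecidableRel graphK3.Adj := fun a b =>
  decidable_of_iff _ (SimpleGraph.top_adj a b).symm

set_option maxHeartbeats 1000000 in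
private lemma myK3 {a b c : V} (hab : G.Adj a b) (hac : G.Adj a c) (hbc : G.Adj b c) :
    ContainsInduced graphK3 G := by
  have e0 : ∀ h, (![a,b,c] : Fin 3 → V) ⟨0, h⟩ = a := fun _ => rfl
  have e1 : ∀ h, (![a,b,c] : Fin 3 → V) ⟨1, h⟩ = b := fun _ => rfl
  have e2 : ∀ h, (![a,b,c] : Fin 3 → V) ⟨2, h⟩ = c := fun _ => rfl
  refine ⟨⟨(![a,b,c] : Fin 3 → V), ?_⟩, ?_⟩
  · intro x y h
    fin_cases x <;> fin_cases y <;> simp only [Function.Embedding.coeFn_mk, e0,e1,e2] at h <;>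
      first
      | rfl
      | exact absurd h hab.ne | exact absurd h hab.ne'
      | exact absurd h hac.ne | exact absurd h hac.ne'
      | exact absurd h hbc.ne | exact absurd h hbc.ne'
  · intro x y
    fin_cases x <;> fin_cases y <;> simp only [Function.Embedding.coeFn_mk, e0,e1,e2] <;>
      first
      | exact iff_of_true hab (by decide) | exact iff_of_true hab.symm (by decide)
      | exact iff_of_true hac (by decide) | exact iff_of_true hac.symm (by decide)
      | exact iff_of_true hbc (by decide) | exact iff_of_true hbc.symm (by decide)
      | exact iff_of_false (G.loopless.irrefl a) (by decide)
      | exact iff_of_false (G.loopless.irrefl b) (by decide)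
      | exact iff_of_false (G.loopless.irrefl c) (by decide)

set_option maxHeartbeats 1000000 in
private lemma myC6 {v0 v1 v2 v3 v4 v5 : V}
    (d02 : v0 ≠ v2) (d03 : v0 ≠ v3) (d04 : v0 ≠ v4) (d13 : v1 ≠ v3) (d14 : v1 ≠ v4)
    (d15 : v1 ≠ v5) (d24 : v2 ≠ v4) (d25 : v2 ≠ v5) (d35 : v3 ≠ v5)
    (a01 : G.Adj v0 v1) (a12 : G.Adj v1 v2) (a23 : G.Adj v2 v3) (a34 : G.Adj v3 v4)
    (a45 : G.Adj v4 v5) (a50 : G.Adj v5 v0)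
    (n02 : ¬ G.Adj v0 v2) (n03 : ¬ G.Adj v0 v3) (n04 : ¬ G.Adj v0 v4)
    (n13 : ¬ G.Adj v1 v3) (n14 : ¬ G.Adj v1 v4) (n15 : ¬ G.Adj v1 v5)
    (n24 : ¬ G.Adj v2 v4) (n25 : ¬ G.Adj v2 v5) (n35 : ¬ G.Adj v3 v5) :
    ContainsInduced (cycleG 6) G := by
  have e0 : ∀ h, (![v0,v1,v2,v3,v4,v5] : Fin 6 → V) ⟨0, h⟩ = v0 := fun _ => rfl
  have e1 : ∀ h, (![v0,v1,v2,v3,v4,v5] : Fin 6 → V) ⟨1, h⟩ = v1 := fun _ => rfl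
  have e2 : ∀ h, (![v0,v1,v2,v3,v4,v5] : Fin 6 → V) ⟨2, h⟩ = v2 := fun _ => rfl
  have e3 : ∀ h, (![v0,v1,v2,v3,v4,v5] : Fin 6 → V) ⟨3, h⟩ = v3 := fun _ => rfl
  have e4 : ∀ h, (![v0,v1,v2,v3,v4,v5] : Fin 6 → V) ⟨4, h⟩ = v4 := fun _ => rfl
  have e5 : ∀ h, (![v0,v1,v2,v3,v4,v5] : Fin 6 → V) ⟨5, h⟩ = v5 := fun _ => rfl
  refine ⟨⟨(![v0,v1,v2,v3,v4,v5] : Fin 6 → V), ?_⟩, ?_⟩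
  · intro x y h
    fin_cases x <;> fin_cases y <;>
        simp only [Function.Embedding.coeFn_mk, e0,e1,e2,e3,e4,e5] at h <;>
      first
      | rfl
      | exact absurd h a01.ne | exact absurd h a01.ne'
      | exact absurd h a12.ne | exact absurd h a12.ne'
      | exact absurd h a23.ne | exact absurd h a23.ne'
      | exact absurd h a34.ne | exact absurd h a34.ne'
      | exact absurd h a45.ne | exact absurd h a45.ne'
      | exact absurd h a50.ne | exact absurd h a50.ne'
      | exact absurd h d02 | exact absurd h d02.symm
      | exact absurd h d03 | exact absurd h d03.symm
      | exact absurd h d04 | exact absurd h d04.symm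
      | exact absurd h d13 | exact absurd h d13.symm
      | exact absurd h d14 | exact absurd h d14.symm
      | exact absurd h d15 | exact absurd h d15.symm
      | exact absurd h d24 | exact absurd h d24.symm
      | exact absurd h d25 | exact absurd h d25.symm
      | exact absurd h d35 | exact absurd h d35.symm
  · show ∀ {a b : Fin 6}, G.Adj (![v0,v1,v2,v3,v4,v5] a) (![v0,v1,v2,v3,v4,v5] b) ↔ (cycleG 6).Adj a b
    intro x y
    fin_cases x <;> fin_cases y <;>
        simp only [Function.Embedding.coeFn_mk, e0,e1,e2,e3,e4,e5] <;>
      first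
      | exact iff_of_true a01 (by decide) | exact iff_of_true a01.symm (by decide)
      | exact iff_of_true a12 (by decide) | exact iff_of_true a12.symm (by decide)
      | exact iff_of_true a23 (by decide) | exact iff_of_true a23.symm (by decide)
      | exact iff_of_true a34 (by decide) | exact iff_of_true a34.symm (by decide)
      | exact iff_of_true a45 (by decide) | exact iff_of_true a45.symm (by decide)
      | exact iff_of_true a50 (by decide) | exact iff_of_true a50.symm (by decide)
      | exact iff_of_false (G.loopless.irrefl v0) (by decide)
      | exact iff_of_false (G.loopless.irrefl v1) (by decide)
      | exact iff_of_false (G.loopless.irrefl v2) (by decide)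
      | exact iff_of_false (G.loopless.irrefl v3) (by decide)
      | exact iff_of_false (G.loopless.irrefl v4) (by decide)
      | exact iff_of_false (G.loopless.irrefl v5) (by decide)
      | exact iff_of_false n02 (by decide) | exact iff_of_false (fun h => n02 h.symm) (by decide)
      | exact iff_of_false n03 (by decide) | exact iff_of_false (fun h => n03 h.symm) (by decide)
      | exact iff_of_false n04 (by decide) | exact iff_of_false (fun h => n04 h.symm) (by decide)
      | exact iff_of_false n13 (by decide) | exact iff_of_false (fun h => n13 h.symm) (by decide)
      | exact iff_of_false n14 (by decide) | exact iff_of_false (fun h => n14 h.symm) (by decide)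
      | exact iff_of_false n15 (by decide) | exact iff_of_false (fun h => n15 h.symm) (by decide)
      | exact iff_of_false n24 (by decide) | exact iff_of_false (fun h => n24 h.symm) (by decide)
      | exact iff_of_false n25 (by decide) | exact iff_of_false (fun h => n25 h.symm) (by decide)
      | exact iff_of_false n35 (by decide) | exact iff_of_false (fun h => n35 h.symm) (by decide)

set_option maxHeartbeats 1000000 in
private lemma myX3 {v0 v1 v2 v3 v4 v5 v6 : V}
    (d02 : v0 ≠ v2) (d03 : v0 ≠ v3) (d04 : v0 ≠ v4) (d06 : v0 ≠ v6) (d13 : v1 ≠ v3) (d14 : v1 ≠ v4) (d15 : v1 ≠ v5) (d16 : v1 ≠ v6) (d24 : v2 ≠ v4) (d26 : v2 ≠ v6) (d35 : v3 ≠ v5) (d36 : v3 ≠ v6) (d46 : v4 ≠ v6)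
    (a01 : G.Adj v0 v1) (a12 : G.Adj v1 v2) (a23 : G.Adj v2 v3) (a34 : G.Adj v3 v4) (a50 : G.Adj v5 v0) (a52 : G.Adj v5 v2) (a54 : G.Adj v5 v4) (a56 : G.Adj v5 v6)
    (n02 : ¬ G.Adj v0 v2) (n03 : ¬ G.Adj v0 v3) (n04 : ¬ G.Adj v0 v4) (n06 : ¬ G.Adj v0 v6) (n13 : ¬ G.Adj v1 v3) (n14 : ¬ G.Adj v1 v4) (n15 : ¬ G.Adj v1 v5) (n16 : ¬ G.Adj v1 v6) (n24 : ¬ G.Adj v2 v4) (n26 : ¬ G.Adj v2 v6) (n35 : ¬ G.Adj v3 v5) (n36 : ¬ G.Adj v3 v6) (n46 : ¬ G.Adj v4 v6) :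
    ContainsInduced graphX3 G := by
  have e0 : ∀ h, (![v0,v1,v2,v3,v4,v5,v6] : Fin 7 → V) ⟨0, h⟩ = v0 := fun _ => rfl
  have e1 : ∀ h, (![v0,v1,v2,v3,v4,v5,v6] : Fin 7 → V) ⟨1, h⟩ = v1 := fun _ => rfl
  have e2 : ∀ h, (![v0,v1,v2,v3,v4,v5,v6] : Fin 7 → V) ⟨2, h⟩ = v2 := fun _ => rfl
  have e3 : ∀ h, (![v0,v1,v2,v3,v4,v5,v6] : Fin 7 → V) ⟨3, h⟩ = v3 := fun _ => rfl
  have e4 : ∀ h, (![v0,v1,v2,v3,v4,v5,v6] : Fin 7 → V) ⟨4, h⟩ = v4 := fun _ => rfl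
  have e5 : ∀ h, (![v0,v1,v2,v3,v4,v5,v6] : Fin 7 → V) ⟨5, h⟩ = v5 := fun _ => rfl
  have e6 : ∀ h, (![v0,v1,v2,v3,v4,v5,v6] : Fin 7 → V) ⟨6, h⟩ = v6 := fun _ => rfl
  refine ⟨⟨(![v0,v1,v2,v3,v4,v5,v6] : Fin 7 → V), ?_⟩, ?_⟩
  · intro x y h
    fin_cases x <;> fin_cases y <;> simp only [Function.Embedding.coeFn_mk, e0,e1,e2,e3,e4,e5,e6] at h <;>
      first
      | rfl
      | exact absurd h a01.ne | exact absurd h a01.ne'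
      | exact absurd h a12.ne | exact absurd h a12.ne'
      | exact absurd h a23.ne | exact absurd h a23.ne'
      | exact absurd h a34.ne | exact absurd h a34.ne'
      | exact absurd h a50.ne | exact absurd h a50.ne'
      | exact absurd h a52.ne | exact absurd h a52.ne'
      | exact absurd h a54.ne | exact absurd h a54.ne'
      | exact absurd h a56.ne | exact absurd h a56.ne'
      | exact absurd h d02 | exact absurd h d02.symm
      | exact absurd h d03 | exact absurd h d03.symm
      | exact absurd h d04 | exact absurd h d04.symm
      | exact absurd h d06 | exact absurd h d06.symm
      | exact absurd h d13 | exact absurd h d13.symm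
      | exact absurd h d14 | exact absurd h d14.symm
      | exact absurd h d15 | exact absurd h d15.symm
      | exact absurd h d16 | exact absurd h d16.symm
      | exact absurd h d24 | exact absurd h d24.symm
      | exact absurd h d26 | exact absurd h d26.symm
      | exact absurd h d35 | exact absurd h d35.symm
      | exact absurd h d36 | exact absurd h d36.symm
      | exact absurd h d46 | exact absurd h d46.symm
  · intro x y
    fin_cases x <;> fin_cases y <;> simp only [Function.Embedding.coeFn_mk, e0,e1,e2,e3,e4,e5,e6] <;>
      first
      | exact iff_of_true a01 (by decide) | exact iff_of_true a01.symm (by decide)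
      | exact iff_of_true a12 (by decide) | exact iff_of_true a12.symm (by decide)
      | exact iff_of_true a23 (by decide) | exact iff_of_true a23.symm (by decide)
      | exact iff_of_true a34 (by decide) | exact iff_of_true a34.symm (by decide)
      | exact iff_of_true a50 (by decide) | exact iff_of_true a50.symm (by decide)
      | exact iff_of_true a52 (by decide) | exact iff_of_true a52.symm (by decide)
      | exact iff_of_true a54 (by decide) | exact iff_of_true a54.symm (by decide)
      | exact iff_of_true a56 (by decide) | exact iff_of_true a56.symm (by decide)
      | exact iff_of_false (G.loopless.irrefl v0) (by decide)
      | exact iff_of_false (G.loopless.irrefl v1) (by decide)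
      | exact iff_of_false (G.loopless.irrefl v2) (by decide)
      | exact iff_of_false (G.loopless.irrefl v3) (by decide)
      | exact iff_of_false (G.loopless.irrefl v4) (by decide)
      | exact iff_of_false (G.loopless.irrefl v5) (by decide)
      | exact iff_of_false (G.loopless.irrefl v6) (by decide)
      | exact iff_of_false n02 (by decide) | exact iff_of_false (fun h => n02 h.symm) (by decide)
      | exact iff_of_false n03 (by decide) | exact iff_of_false (fun h => n03 h.symm) (by decide)
      | exact iff_of_false n04 (by decide) | exact iff_of_false (fun h => n04 h.symm) (by decide)
      | exact iff_of_false n06 (by decide) | exact iff_of_false (fun h => n06 h.symm) (by decide)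
      | exact iff_of_false n13 (by decide) | exact iff_of_false (fun h => n13 h.symm) (by decide)
      | exact iff_of_false n14 (by decide) | exact iff_of_false (fun h => n14 h.symm) (by decide)
      | exact iff_of_false n15 (by decide) | exact iff_of_false (fun h => n15 h.symm) (by decide)
      | exact iff_of_false n16 (by decide) | exact iff_of_false (fun h => n16 h.symm) (by decide)
      | exact iff_of_false n24 (by decide) | exact iff_of_false (fun h => n24 h.symm) (by decide)
      | exact iff_of_false n26 (by decide) | exact iff_of_false (fun h => n26 h.symm) (by decide)
      | exact iff_of_false n35 (by decide) | exact iff_of_false (fun h => n35 h.symm) (by decide)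
      | exact iff_of_false n36 (by decide) | exact iff_of_false (fun h => n36 h.symm) (by decide)
      | exact iff_of_false n46 (by decide) | exact iff_of_false (fun h => n46 h.symm) (by decide)

private lemma zmod_shift_ne {m : ℕ} (hm : 10 ≤ m) (x y : ZMod m) (k : ℕ)
    (hk0 : k ≠ 0) (hk : k < 10) (hxy : y = x + (k : ZMod m)) : x ≠ y := by
  haveI : NeZero m := ⟨by omega⟩
  subst hxy
  intro h
  have h2 : ((k : ℕ) : ZMod m) = 0 := by linear_combination -h
  rw [ZMod.natCast_eq_zero_iff] at h2
  have := Nat.le_of_dvd (by omega) h2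
  omega

private lemma hole_c_nadj {m : ℕ} {c : ZMod m → V} (hm : 10 ≤ m)
    (hadj : ∀ x y : ZMod m, G.Adj (c x) (c y) ↔ (y = x + 1 ∨ x = y + 1))
    (x y : ZMod m) (k : ℕ) (h2 : 2 ≤ k) (h8 : k ≤ 8) (hy : y = x + (k : ZMod m)) :
    ¬ G.Adj (c x) (c y) := by
  rw [hadj]
  rintro (h | h)
  · refine zmod_shift_ne hm (x+1) y (k-1) (by omega) (by omega) ?_ h.symm
    rw [hy]; push_cast [Nat.cast_sub (show 1 ≤ k by omega)]; ring
  · refine zmod_shift_ne hm x (y+1) (k+1) (by omega) (by omega) ?_ h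
    rw [hy]; push_cast; ring

private lemma Ai_adj_left {m : ℕ} {c : ZMod m → V} {j : ZMod m} {u : V}
    (hu : u ∈ Ai G m c j) : G.Adj u (c (j-1)) := by
  have hu' : G.neighborSet u ∩ Set.range c = {c (j-1), c (j+1)} := hu
  have h : c (j-1) ∈ G.neighborSet u ∩ Set.range c := by
    rw [hu']; exact Set.mem_insert _ _
  exact h.1

private lemma Ai_adj_right {m : ℕ} {c : ZMod m → V} {j : ZMod m} {u : V}
    (hu : u ∈ Ai G m c j) : G.Adj u (c (j+1)) := by
  have hu' : G.neighborSet u ∩ Set.range c = {c (j-1), c (j+1)} := hu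
  have h : c (j+1) ∈ G.neighborSet u ∩ Set.range c := by
    rw [hu']; exact Set.mem_insert_of_mem _ rfl
  exact h.1

private lemma Ai_nadj {m : ℕ} {c : ZMod m → V} (hinj : Function.Injective c)
    {j : ZMod m} {u : V} (hu : u ∈ Ai G m c j) (x : ZMod m)
    (h1 : x ≠ j - 1) (h2 : x ≠ j + 1) : ¬ G.Adj u (c x) := by
  intro h
  have hu' : G.neighborSet u ∩ Set.range c = {c (j-1), c (j+1)} := hu
  have hx : c x ∈ ({c (j-1), c (j+1)} : Set V) := by
    rw [← hu']; exact ⟨h, Set.mem_range_self x⟩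
  simp only [Set.mem_insert_iff, Set.mem_singleton_iff] at hx
  rcases hx with h' | h'
  · exact h1 (hinj h')
  · exact h2 (hinj h')

private lemma Bi_adj {m : ℕ} {c : ZMod m → V} {j : ZMod m} {w : V}
    (hw : w ∈ Bi G m c j) : G.Adj w (c j) := by
  have hw' : G.neighborSet w ∩ Set.range c = {c j} := hw
  have h : c j ∈ G.neighborSet w ∩ Set.range c := by
    rw [hw']; exact Set.mem_singleton _
  exact h.1

private lemma Bi_nadj {m : ℕ} {c : ZMod m → V} (hinj : Function.Injective c)
    {j : ZMod m} {w : V} (hw : w ∈ Bi G m c j) (x : ZMod m)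
    (h1 : x ≠ j) : ¬ G.Adj w (c x) := by
  intro h
  have hw' : G.neighborSet w ∩ Set.range c = {c j} := hw
  have hx : c x ∈ ({c j} : Set V) := by
    rw [← hw']; exact ⟨h, Set.mem_range_self x⟩
  exact h1 (hinj hx)

private lemma core1 (hG : AlmostBPG G) {m : ℕ} {c : ZMod m → V} (hm : 10 ≤ m)
    (hinj : Function.Injective c)
    (hadj : ∀ x y : ZMod m, G.Adj (c x) (c y) ↔ (y = x + 1 ∨ x = y + 1))
    (i : ZMod m) {w w' u : V}
    (hw : w ∈ Bi G m c (i+2)) (hw' : w' ∈ Ai G m c (i+1)) (hu : u ∈ Ai G m c i)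
    (hwu : G.Adj w u) (hw'u : ¬ G.Adj w' u) : False := by
  have K3 : ∀ {a b d : V}, G.Adj a b → G.Adj a d → G.Adj b d → False :=
    fun h1 h2 h3 => hG.1 (myK3 h1 h2 h3)
  have E1 : (i+1) - 1 = i := by ring
  have E2 : (i+1) + 1 = i + 2 := by ring
  have nF : (i-1 : ZMod m) ≠ i + 2 :=
    zmod_shift_ne hm (i-1) (i+2) 3 (by norm_num) (by omega) (by push_cast; ring)
  have nA : (i : ZMod m) ≠ i - 1 :=
    (zmod_shift_ne hm (i-1) i 1 (by norm_num) (by omega) (by push_cast; ring)).symm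
  have nB : (i : ZMod m) ≠ i + 1 :=
    zmod_shift_ne hm i (i+1) 1 (by norm_num) (by omega) (by push_cast; ring)
  have nD : (i+1 : ZMod m) ≠ i + 2 :=
    zmod_shift_ne hm (i+1) (i+2) 1 (by norm_num) (by omega) (by push_cast; ring)
  have nE : (i : ZMod m) ≠ i + 2 :=
    zmod_shift_ne hm i (i+2) 2 (by norm_num) (by omega) (by push_cast; ring)
  have hw'c0 : G.Adj w' (c i) := by have h := Ai_adj_left hw'; rwa [E1] at h
  have hw'c2 : G.Adj w' (c (i+2)) := by have h := Ai_adj_right hw'; rwa [E2] at h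
  have huc_l : G.Adj u (c (i-1)) := Ai_adj_left hu
  have hwc2 : G.Adj w (c (i+2)) := Bi_adj hw
  have n_u_ci : ¬ G.Adj u (c i) := Ai_nadj hinj hu i nA nB
  have n_u_c2 : ¬ G.Adj u (c (i+2)) := Ai_nadj hinj hu (i+2) nF.symm nD.symm
  have n_w_ci : ¬ G.Adj w (c i) := Bi_nadj hinj hw i nE
  have n_w_cm1 : ¬ G.Adj w (c (i-1)) := Bi_nadj hinj hw (i-1) nF
  have n_w'_cm1 : ¬ G.Adj w' (c (i-1)) :=
    Ai_nadj hinj hw' (i-1) (by rw [E1]; exact nA.symm) (by rw [E2]; exact nF)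
  have a_c0_cm1 : G.Adj (c i) (c (i-1)) := (hadj i (i-1)).mpr (Or.inr (by ring))
  have n_c2_c0 : ¬ G.Adj (c (i+2)) (c i) := fun h =>
    hole_c_nadj hm hadj i (i+2) 2 (by norm_num) (by norm_num) (by push_cast; ring) h.symm
  have n_c2_cm1 : ¬ G.Adj (c (i+2)) (c (i-1)) := fun h =>
    hole_c_nadj hm hadj (i-1) (i+2) 3 (by norm_num) (by norm_num) (by push_cast; ring) h.symm
  have n_ww' : ¬ G.Adj w w' := fun h => K3 h hwc2 hw'c2
  have d02 : u ≠ c (i+2) := by rintro rfl; exact hw'u hw'c2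
  have d03 : u ≠ w' := by rintro rfl; exact n_ww' hwu
  have d04 : u ≠ c i := by rintro rfl; exact hw'u hw'c0
  have d13 : w ≠ w' := by rintro rfl; exact hw'u hwu
  have d14 : w ≠ c i := by rintro rfl; exact n_w_cm1 a_c0_cm1
  have d15 : w ≠ c (i-1) := by rintro rfl; exact n_c2_cm1 hwc2.symm
  have d24 : c (i+2) ≠ c i := fun h => nE (hinj h).symm
  have d25 : c (i+2) ≠ c (i-1) := fun h => nF (hinj h).symm
  have d35 : w' ≠ c (i-1) := by rintro rfl; exact n_c2_cm1 hw'c2.symm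
  exact hG.2.2.2.2 6 (by norm_num) (by norm_num)
    (myC6 d02 d03 d04 d13 d14 d15 d24 d25 d35
      hwu.symm hwc2 hw'c2.symm hw'c0 a_c0_cm1 huc_l.symm
      n_u_c2 (fun h => hw'u h.symm) n_u_ci n_ww' n_w_ci n_w_cm1 n_c2_c0 n_c2_cm1 n_w'_cm1)

private lemma core3 (hG : AlmostBPG G) {m : ℕ} {c : ZMod m → V} (hm : 10 ≤ m)
    (hinj : Function.Injective c)
    (hadj : ∀ x y : ZMod m, G.Adj (c x) (c y) ↔ (y = x + 1 ∨ x = y + 1))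
    (i : ZMod m) {w w' u u' : V}
    (hw : w ∈ Bi G m c (i+2)) (hw' : w' ∈ Bi G m c (i+2))
    (hu : u ∈ Ai G m c i) (hu' : u' ∈ Ai G m c i)
    (hwu : G.Adj w u) (hw'u' : G.Adj w' u')
    (hwu' : ¬ G.Adj w u') (hw'u : ¬ G.Adj w' u) : False := by
  have K3 : ∀ {a b d : V}, G.Adj a b → G.Adj a d → G.Adj b d → False :=
    fun h1 h2 h3 => hG.1 (myK3 h1 h2 h3)
  have nF : (i-1 : ZMod m) ≠ i + 2 :=
    zmod_shift_ne hm (i-1) (i+2) 3 (by norm_num) (by omega) (by push_cast; ring)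
  have nD : (i+1 : ZMod m) ≠ i + 2 :=
    zmod_shift_ne hm (i+1) (i+2) 1 (by norm_num) (by omega) (by push_cast; ring)
  have n_c2_cm1 : ¬ G.Adj (c (i+2)) (c (i-1)) := fun h =>
    hole_c_nadj hm hadj (i-1) (i+2) 3 (by norm_num) (by norm_num) (by push_cast; ring) h.symm
  have n02 : ¬ G.Adj u (c (i+2)) := Ai_nadj hinj hu (i+2) nF.symm nD.symm
  have n24' : ¬ G.Adj u' (c (i+2)) := Ai_nadj hinj hu' (i+2) nF.symm nD.symm
  have n04 : ¬ G.Adj u u' := fun h => K3 h (Ai_adj_left hu) (Ai_adj_left hu')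
  have n13 : ¬ G.Adj w w' := fun h => K3 h (Bi_adj hw) (Bi_adj hw')
  have n15 : ¬ G.Adj w (c (i-1)) := Bi_nadj hinj hw (i-1) nF
  have n35 : ¬ G.Adj w' (c (i-1)) := Bi_nadj hinj hw' (i-1) nF
  have d02 : u ≠ c (i+2) := by rintro rfl; exact hw'u (Bi_adj hw')
  have d03 : u ≠ w' := by rintro rfl; exact n13 hwu
  have d04 : u ≠ u' := by rintro rfl; exact hwu' hwu
  have d13 : w ≠ w' := by rintro rfl; exact hw'u hwu
  have d14 : w ≠ u' := by rintro rfl; exact n04 hwu.symm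
  have d15 : w ≠ c (i-1) := by rintro rfl; exact n_c2_cm1 (Bi_adj hw).symm
  have d24 : c (i+2) ≠ u' := by rintro rfl; exact n_c2_cm1 (Ai_adj_left hu')
  have d25 : c (i+2) ≠ c (i-1) := fun h => nF (hinj h).symm
  have d35 : w' ≠ c (i-1) := by rintro rfl; exact n_c2_cm1 (Bi_adj hw').symm
  exact hG.2.2.2.2 6 (by norm_num) (by norm_num)
    (myC6 d02 d03 d04 d13 d14 d15 d24 d25 d35
      hwu.symm (Bi_adj hw) (Bi_adj hw').symm hw'u' (Ai_adj_left hu') (Ai_adj_left hu).symm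
      n02 (fun h => hw'u h.symm) n04 n13 hwu' n15
      (fun h => n24' h.symm) n_c2_cm1 n35)

private lemma core2 (hG : AlmostBPG G) {m : ℕ} {c : ZMod m → V} (hm : 10 ≤ m)
    (hinj : Function.Injective c)
    (hadj : ∀ x y : ZMod m, G.Adj (c x) (c y) ↔ (y = x + 1 ∨ x = y + 1))
    (i : ZMod m) {w w' u u' : V}
    (hw : w ∈ Ai G m c (i+1)) (hw' : w' ∈ Ai G m c (i+1))
    (hu : u ∈ Ai G m c i) (hu' : u' ∈ Ai G m c i)
    (hwu : G.Adj w u) (hw'u' : G.Adj w' u')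
    (hwu' : ¬ G.Adj w u') (hw'u : ¬ G.Adj w' u) : False := by
  have K3 : ∀ {a b d : V}, G.Adj a b → G.Adj a d → G.Adj b d → False :=
    fun h1 h2 h3 => hG.1 (myK3 h1 h2 h3)
  have E1 : (i+1) - 1 = i := by ring
  have E2 : (i+1) + 1 = i + 2 := by ring
  have nA : (i : ZMod m) ≠ i - 1 :=
    (zmod_shift_ne hm (i-1) i 1 (by norm_num) (by omega) (by push_cast; ring)).symm
  have nB : (i : ZMod m) ≠ i + 1 :=
    zmod_shift_ne hm i (i+1) 1 (by norm_num) (by omega) (by push_cast; ring)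
  have nF : (i-1 : ZMod m) ≠ i + 2 :=
    zmod_shift_ne hm (i-1) (i+2) 3 (by norm_num) (by omega) (by push_cast; ring)
  have nG : (i-2 : ZMod m) ≠ i - 1 :=
    zmod_shift_ne hm (i-2) (i-1) 1 (by norm_num) (by omega) (by push_cast; ring)
  have nH : (i-2 : ZMod m) ≠ i + 1 :=
    zmod_shift_ne hm (i-2) (i+1) 3 (by norm_num) (by omega) (by push_cast; ring)
  have nI : (i-2 : ZMod m) ≠ i :=
    zmod_shift_ne hm (i-2) i 2 (by norm_num) (by omega) (by push_cast; ring)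
  have nJ : (i-2 : ZMod m) ≠ i + 2 :=
    zmod_shift_ne hm (i-2) (i+2) 4 (by norm_num) (by omega) (by push_cast; ring)
  have hwc0 : G.Adj w (c i) := by have h := Ai_adj_left hw; rwa [E1] at h
  have hw'c0 : G.Adj w' (c i) := by have h := Ai_adj_left hw'; rwa [E1] at h
  have a_cm1_c0 : G.Adj (c (i-1)) (c i) := (hadj (i-1) i).mpr (Or.inl (by ring))
  have a_cm1_cm2 : G.Adj (c (i-1)) (c (i-2)) := (hadj (i-1) (i-2)).mpr (Or.inr (by ring))
  have n26 : ¬ G.Adj (c i) (c (i-2)) := fun h =>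
    hole_c_nadj hm hadj (i-2) i 2 (by norm_num) (by norm_num) (by push_cast; ring) h.symm
  have n02 : ¬ G.Adj u (c i) := Ai_nadj hinj hu i nA nB
  have n04 : ¬ G.Adj u u' := fun h => K3 h (Ai_adj_left hu) (Ai_adj_left hu')
  have n06 : ¬ G.Adj u (c (i-2)) := Ai_nadj hinj hu (i-2) nG nH
  have n13 : ¬ G.Adj w w' := fun h => K3 h hwc0 hw'c0
  have n15 : ¬ G.Adj w (c (i-1)) :=
    Ai_nadj hinj hw (i-1) (by rw [E1]; exact nA.symm) (by rw [E2]; exact nF)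
  have n16 : ¬ G.Adj w (c (i-2)) :=
    Ai_nadj hinj hw (i-2) (by rw [E1]; exact nI) (by rw [E2]; exact nJ)
  have n24 : ¬ G.Adj (c i) u' := fun h => (Ai_nadj hinj hu' i nA nB) h.symm
  have n35 : ¬ G.Adj w' (c (i-1)) :=
    Ai_nadj hinj hw' (i-1) (by rw [E1]; exact nA.symm) (by rw [E2]; exact nF)
  have n36 : ¬ G.Adj w' (c (i-2)) :=
    Ai_nadj hinj hw' (i-2) (by rw [E1]; exact nI) (by rw [E2]; exact nJ)
  have n46 : ¬ G.Adj u' (c (i-2)) := Ai_nadj hinj hu' (i-2) nG nH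
  have d02 : u ≠ c i := by rintro rfl; exact hw'u hw'c0
  have d03 : u ≠ w' := by rintro rfl; exact n13 hwu
  have d04 : u ≠ u' := by rintro rfl; exact hwu' hwu
  have d06 : u ≠ c (i-2) := by rintro rfl; exact n16 hwu
  have d13 : w ≠ w' := by rintro rfl; exact hw'u hwu
  have d14 : w ≠ u' := by rintro rfl; exact n04 hwu.symm
  have d15 : w ≠ c (i-1) := by rintro rfl; exact n16 a_cm1_cm2
  have d16 : w ≠ c (i-2) := by rintro rfl; exact n26 hwc0.symm
  have d24 : c i ≠ u' := by rintro rfl; exact hwu' hwc0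
  have d26 : c i ≠ c (i-2) := fun h => nI (hinj h).symm
  have d35 : w' ≠ c (i-1) := by rintro rfl; exact n36 a_cm1_cm2
  have d36 : w' ≠ c (i-2) := by rintro rfl; exact n26 hw'c0.symm
  have d46 : u' ≠ c (i-2) := by rintro rfl; exact n36 hw'u'
  exact hG.2.2.2.1
    (myX3 d02 d03 d04 d06 d13 d14 d15 d16 d24 d26 d35 d36 d46
      hwu.symm hwc0 hw'c0.symm hw'u' (Ai_adj_left hu).symm a_cm1_c0 (Ai_adj_left hu').symm
        a_cm1_cm2
      n02 (fun h => hw'u h.symm) n04 n06 n13 hwu' n15 n16 n24 n26 n35 n36 n46)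

private lemma main_plus (hG : AlmostBPG G) (m : ℕ) (c : ZMod m → V)
    (hm : 10 ≤ m) (hemb : IsHoleEmb G m c) (i : ZMod m) :
    (∀ w ∈ Bi G m c (i+2) ∪ Ai G m c (i+1), ∀ w' ∈ Bi G m c (i+2) ∪ Ai G m c (i+1),
      G.neighborSet w ∩ Ai G m c i ⊆ G.neighborSet w' ∩ Ai G m c i ∨
        G.neighborSet w' ∩ Ai G m c i ⊆ G.neighborSet w ∩ Ai G m c i) ∧
      ∀ w ∈ Bi G m c (i+2), ∀ w' ∈ Ai G m c (i+1),
        G.neighborSet w ∩ Ai G m c i ⊆ G.neighborSet w' ∩ Ai G m c i := by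
  obtain ⟨-, hinj, hadj⟩ := hemb
  have hincl : ∀ w ∈ Bi G m c (i+2), ∀ w' ∈ Ai G m c (i+1),
      G.neighborSet w ∩ Ai G m c i ⊆ G.neighborSet w' ∩ Ai G m c i := by
    intro w hw w' hw' v hv
    have hv1 : G.Adj w v := hv.1
    have hv2 : v ∈ Ai G m c i := hv.2
    refine ⟨?_, hv2⟩
    by_contra hna
    exact core1 hG hm hinj hadj i hw hw' hv2 hv1 hna
  refine ⟨?_, hincl⟩
  intro w hw w' hw'
  have extract : ∀ {a b : V}, ¬ (G.neighborSet a ∩ Ai G m c i ⊆ G.neighborSet b ∩ Ai G m c i) →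
      ∃ z, z ∈ Ai G m c i ∧ G.Adj a z ∧ ¬ G.Adj b z := by
    intro a b hab
    obtain ⟨z, hz1, hz2⟩ := Set.not_subset.mp hab
    exact ⟨z, hz1.2, hz1.1, fun h => hz2 ⟨h, hz1.2⟩⟩
  rcases hw with hwB | hwA <;> rcases hw' with hw'B | hw'A
  · by_cases h1 : G.neighborSet w ∩ Ai G m c i ⊆ G.neighborSet w' ∩ Ai G m c i
    · exact Or.inl h1
    by_cases h2 : G.neighborSet w' ∩ Ai G m c i ⊆ G.neighborSet w ∩ Ai G m c i
    · exact Or.inr h2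
    obtain ⟨z, hzA, hz1, hz2⟩ := extract h1
    obtain ⟨z', hz'A, hz'1, hz'2⟩ := extract h2
    exact absurd (core3 hG hm hinj hadj i hwB hw'B hzA hz'A hz1 hz'1 hz'2 hz2) id
  · exact Or.inl (hincl w hwB w' hw'A)
  · exact Or.inr (hincl w' hw'B w hwA)
  · by_cases h1 : G.neighborSet w ∩ Ai G m c i ⊆ G.neighborSet w' ∩ Ai G m c i
    · exact Or.inl h1
    by_cases h2 : G.neighborSet w' ∩ Ai G m c i ⊆ G.neighborSet w ∩ Ai G m c i
    · exact Or.inr h2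
    obtain ⟨z, hzA, hz1, hz2⟩ := extract h1
    obtain ⟨z', hz'A, hz'1, hz'2⟩ := extract h2
    exact absurd (core2 hG hm hinj hadj i hwA hw'A hzA hz'A hz1 hz'1 hz'2 hz2) id

private lemma range_flip {m : ℕ} (c : ZMod m → V) (i : ZMod m) :
    Set.range (fun x : ZMod m => c (2*i - x)) = Set.range c := by
  ext v
  constructor
  · rintro ⟨a, rfl⟩; exact ⟨2*i - a, rfl⟩
  · rintro ⟨a, rfl⟩; exact ⟨2*i - a, congrArg c (by ring)⟩

private lemma Ai_flip (G : SimpleGraph V) {m : ℕ} (c : ZMod m → V) (i j : ZMod m) :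
    Ai G m (fun x : ZMod m => c (2*i - x)) j = Ai G m c (2*i - j) := by
  ext v
  show G.neighborSet v ∩ Set.range (fun x : ZMod m => c (2*i - x))
        = {c (2*i - (j-1)), c (2*i - (j+1))}
      ↔ G.neighborSet v ∩ Set.range c = {c ((2*i-j) - 1), c ((2*i-j) + 1)}
  rw [range_flip c i, show (2*i - (j-1) : ZMod m) = (2*i - j) + 1 from by ring,
    show (2*i - (j+1) : ZMod m) = (2*i - j) - 1 from by ring, Set.pair_comm]

private lemma Bi_flip (G : SimpleGraph V) {m : ℕ} (c : ZMod m → V) (i j : ZMod m) :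
    Bi G m (fun x : ZMod m => c (2*i - x)) j = Bi G m c (2*i - j) := by
  ext v
  show G.neighborSet v ∩ Set.range (fun x : ZMod m => c (2*i - x)) = {c (2*i - j)}
      ↔ G.neighborSet v ∩ Set.range c = {c (2*i - j)}
  rw [range_flip c i]

end Helpers


theorem neighborhoods_in_Ai_comparable {V : Type*} (G : SimpleGraph V) (hconn : G.Connected) (hG : AlmostBPG G)
    (m : ℕ) (c : ZMod m → V) (hm : 10 ≤ m) (hC : ShortestHole G m c)
    (i p q : ZMod m)
    (hpq : (p = i - 2 ∧ q = i - 1) ∨ (p = i + 2 ∧ q = i + 1)) :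
    (∀ w ∈ Bi G m c p ∪ Ai G m c q, ∀ w' ∈ Bi G m c p ∪ Ai G m c q,
      G.neighborSet w ∩ Ai G m c i ⊆ G.neighborSet w' ∩ Ai G m c i ∨
        G.neighborSet w' ∩ Ai G m c i ⊆ G.neighborSet w ∩ Ai G m c i) ∧
      ∀ w ∈ Bi G m c p, ∀ w' ∈ Ai G m c q,
        G.neighborSet w ∩ Ai G m c i ⊆ G.neighborSet w' ∩ Ai G m c i := by
  
  rcases hpq with ⟨rfl, rfl⟩ | ⟨rfl, rfl⟩
  · -- minus case: reflect the hole
    have hemb' : IsHoleEmb G m (fun x : ZMod m => c (2*i - x)) := by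
      obtain ⟨h5, hcinj, hcadj⟩ := hC.1
      refine ⟨h5, fun a b h => ?_, fun x y => ?_⟩
      · have h2 := hcinj h
        linear_combination -h2
      · show G.Adj (c (2*i - x)) (c (2*i - y)) ↔ (y = x + 1 ∨ x = y + 1)
        rw [hcadj]
        constructor <;> rintro (h | h) <;>
          first
            | exact Or.inl (by linear_combination h)
            | exact Or.inl (by linear_combination -h)
            | exact Or.inr (by linear_combination h)
            | exact Or.inr (by linear_combination -h)
    have H := main_plus hG m (fun x : ZMod m => c (2*i - x)) hm hemb' i
    simp only [Ai_flip, Bi_flip] at H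
    rw [show (2*i - (i+2) : ZMod m) = i - 2 from by ring,
      show (2*i - (i+1) : ZMod m) = i - 1 from by ring,
      show (2*i - i : ZMod m) = i from by ring] at H
    exact H
  · exact main_plus hG m c hm hC.1 i
end

section
/- Let i be in {0,...,m-1} and let (i±2,i±1) denote either (i-2,i-1) or (i+2,i+1). For every u,u' in A_{i±2} ∪ B_{i±1}, the sets N(u) ∩ B_i and N(u') ∩ B_i are comparable under inclusion. Moreover, if u in A_{i±2} and u' in B_{i±1}, then N(u) ∩ B_i ⊆ N(u') ∩ B_i. -/
open SimpleGraph

lemma containsOf {W V : Type*} (H : SimpleGraph W) (G : SimpleGraph V)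
    (f : W → V)
    (hadj : ∀ a b, H.Adj a b ↔ G.Adj (f a) (f b))
    (hsep : ∀ a b : W, a ≠ b → ∃ x, ¬(H.Adj a x ↔ H.Adj b x)) :
    ContainsInduced H G := by
  have hinj : Function.Injective f := by
    intro a b hab
    by_contra hne
    obtain ⟨x, hx⟩ := hsep a b hne
    exact hx ⟨fun h => (hadj b x).mpr (hab ▸ (hadj a x).mp h),
      fun h => (hadj a x).mpr (hab ▸ (hadj b x).mp h)⟩
  exact ⟨⟨⟨f, hinj⟩, fun {a b} => (hadj a b).symm⟩⟩

lemma no_triangle {V : Type*} {G : SimpleGraph V} (hK3 : ¬ContainsInduced graphK3 G)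
    {a b d : V} (hab : G.Adj a b) (hbd : G.Adj b d) (had : G.Adj a d) : False := by
  apply hK3
  apply containsOf graphK3 G ![a, b, d]
  · intro x y
    have h1 := hab.symm; have h2 := hbd.symm; have h3 := had.symm
    have n1 : ¬ G.Adj a a := G.loopless.irrefl a
    have n2 : ¬ G.Adj b b := G.loopless.irrefl b
    have n3 : ¬ G.Adj d d := G.loopless.irrefl d
    fin_cases x <;> fin_cases y <;> simp_all [graphK3] <;> assumption
  · decide

lemma zmod_ne {m : ℕ} (hm : 10 ≤ m) {a b : ℤ} (hab : a ≠ b)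
    (h1 : -4 ≤ a) (h2 : a ≤ 4) (h3 : -4 ≤ b) (h4 : b ≤ 4) :
    (a : ZMod m) ≠ (b : ZMod m) := by
  intro h
  have hd : ((a - b : ℤ) : ZMod m) = 0 := by push_cast; rw [h]; ring
  rw [ZMod.intCast_zmod_eq_zero_iff_dvd] at hd
  have h5 : (m : ℤ) ≤ |a - b| :=
    Int.le_of_dvd (abs_pos.mpr (sub_ne_zero.mpr hab)) ((dvd_abs _ _).mpr hd)
  have h6 : |a - b| ≤ 8 := abs_le.mpr ⟨by omega, by omega⟩
  have : (10 : ℤ) ≤ (m : ℤ) := by exact_mod_cast hm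
  omega

lemma x3_contra {V : Type*} {G : SimpleGraph V} (hX3 : ¬ContainsInduced graphX3 G)
    {v0 v1 v2 v3 v4 v5 v6 : V}
    (h01 : G.Adj v0 v1) (h12 : G.Adj v1 v2) (h23 : G.Adj v2 v3) (h34 : G.Adj v3 v4)
    (h05 : G.Adj v0 v5) (h25 : G.Adj v2 v5) (h45 : G.Adj v4 v5) (h56 : G.Adj v5 v6)
    (n02 : ¬G.Adj v0 v2) (n03 : ¬G.Adj v0 v3) (n04 : ¬G.Adj v0 v4) (n06 : ¬G.Adj v0 v6)
    (n13 : ¬G.Adj v1 v3) (n14 : ¬G.Adj v1 v4) (n15 : ¬G.Adj v1 v5) (n16 : ¬G.Adj v1 v6)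
    (n24 : ¬G.Adj v2 v4) (n26 : ¬G.Adj v2 v6)
    (n35 : ¬G.Adj v3 v5) (n36 : ¬G.Adj v3 v6)
    (n46 : ¬G.Adj v4 v6) : False := by
  apply hX3
  apply containsOf graphX3 G ![v0, v1, v2, v3, v4, v5, v6]
  · intro x y
    have e01 := h01.symm; have e12 := h12.symm; have e23 := h23.symm
    have e34 := h34.symm; have e05 := h05.symm; have e25 := h25.symm
    have e45 := h45.symm; have e56 := h56.symm
    have m02 : ¬G.Adj v2 v0 := fun h => n02 h.symm
    have m03 : ¬G.Adj v3 v0 := fun h => n03 h.symm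
    have m04 : ¬G.Adj v4 v0 := fun h => n04 h.symm
    have m06 : ¬G.Adj v6 v0 := fun h => n06 h.symm
    have m13 : ¬G.Adj v3 v1 := fun h => n13 h.symm
    have m14 : ¬G.Adj v4 v1 := fun h => n14 h.symm
    have m15 : ¬G.Adj v5 v1 := fun h => n15 h.symm
    have m16 : ¬G.Adj v6 v1 := fun h => n16 h.symm
    have m24 : ¬G.Adj v4 v2 := fun h => n24 h.symm
    have m26 : ¬G.Adj v6 v2 := fun h => n26 h.symm
    have m35 : ¬G.Adj v5 v3 := fun h => n35 h.symm
    have m36 : ¬G.Adj v6 v3 := fun h => n36 h.symm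
    have m46 : ¬G.Adj v6 v4 := fun h => n46 h.symm
    have l0 : ¬ G.Adj v0 v0 := G.loopless.irrefl v0
    have l1 : ¬ G.Adj v1 v1 := G.loopless.irrefl v1
    have l2 : ¬ G.Adj v2 v2 := G.loopless.irrefl v2
    have l3 : ¬ G.Adj v3 v3 := G.loopless.irrefl v3
    have l4 : ¬ G.Adj v4 v4 := G.loopless.irrefl v4
    have l5 : ¬ G.Adj v5 v5 := G.loopless.irrefl v5
    have l6 : ¬ G.Adj v6 v6 := G.loopless.irrefl v6
    fin_cases x <;> fin_cases y <;>
      simp only [Matrix.cons_val_zero, Matrix.cons_val_one, Matrix.head_cons,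
        Matrix.cons_val_succ] <;>
      first
        | exact iff_of_true (by decide) (by assumption)
        | exact iff_of_false (by decide) (by assumption)
  · decide

lemma x2_contra {V : Type*} {G : SimpleGraph V} (hX2 : ¬ContainsInduced graphX2 G)
    {v0 v1 v2 v3 v4 v5 v6 : V}
    (h01 : G.Adj v0 v1) (h12 : G.Adj v1 v2) (h23 : G.Adj v2 v3) (h30 : G.Adj v3 v0)
    (h04 : G.Adj v0 v4) (h15 : G.Adj v1 v5) (h26 : G.Adj v2 v6)
    (n02 : ¬G.Adj v0 v2) (n05 : ¬G.Adj v0 v5) (n06 : ¬G.Adj v0 v6)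
    (n13 : ¬G.Adj v1 v3) (n14 : ¬G.Adj v1 v4) (n16 : ¬G.Adj v1 v6)
    (n24 : ¬G.Adj v2 v4) (n25 : ¬G.Adj v2 v5)
    (n34 : ¬G.Adj v3 v4) (n35 : ¬G.Adj v3 v5) (n36 : ¬G.Adj v3 v6)
    (n45 : ¬G.Adj v4 v5) (n46 : ¬G.Adj v4 v6) (n56 : ¬G.Adj v5 v6) : False := by
  apply hX2
  apply containsOf graphX2 G ![v0, v1, v2, v3, v4, v5, v6]
  · intro x y
    have e01 := h01.symm; have e12 := h12.symm; have e23 := h23.symm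
    have e30 := h30.symm; have e04 := h04.symm; have e15 := h15.symm
    have e26 := h26.symm
    have m02 : ¬G.Adj v2 v0 := fun h => n02 h.symm
    have m05 : ¬G.Adj v5 v0 := fun h => n05 h.symm
    have m06 : ¬G.Adj v6 v0 := fun h => n06 h.symm
    have m13 : ¬G.Adj v3 v1 := fun h => n13 h.symm
    have m14 : ¬G.Adj v4 v1 := fun h => n14 h.symm
    have m16 : ¬G.Adj v6 v1 := fun h => n16 h.symm
    have m24 : ¬G.Adj v4 v2 := fun h => n24 h.symm
    have m25 : ¬G.Adj v5 v2 := fun h => n25 h.symm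
    have m34 : ¬G.Adj v4 v3 := fun h => n34 h.symm
    have m35 : ¬G.Adj v5 v3 := fun h => n35 h.symm
    have m36 : ¬G.Adj v6 v3 := fun h => n36 h.symm
    have m45 : ¬G.Adj v5 v4 := fun h => n45 h.symm
    have m46 : ¬G.Adj v6 v4 := fun h => n46 h.symm
    have m56 : ¬G.Adj v6 v5 := fun h => n56 h.symm
    have l0 : ¬ G.Adj v0 v0 := G.loopless.irrefl v0
    have l1 : ¬ G.Adj v1 v1 := G.loopless.irrefl v1
    have l2 : ¬ G.Adj v2 v2 := G.loopless.irrefl v2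
    have l3 : ¬ G.Adj v3 v3 := G.loopless.irrefl v3
    have l4 : ¬ G.Adj v4 v4 := G.loopless.irrefl v4
    have l5 : ¬ G.Adj v5 v5 := G.loopless.irrefl v5
    have l6 : ¬ G.Adj v6 v6 := G.loopless.irrefl v6
    fin_cases x <;> fin_cases y <;>
      simp only [Matrix.cons_val_zero, Matrix.cons_val_one, Matrix.head_cons,
        Matrix.cons_val_succ] <;>
      first
        | exact iff_of_true (by decide) (by assumption)
        | exact iff_of_false (by decide) (by assumption)
  · decide

lemma Ai_adj {V : Type*} {G : SimpleGraph V} {m : ℕ} {c : ZMod m → V}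
    (hinj : Function.Injective c) {p : ZMod m} {u : V}
    (hu : u ∈ Ai G m c p) (j : ZMod m) :
    G.Adj u (c j) ↔ (j = p - 1 ∨ j = p + 1) := by
  have hu' : G.neighborSet u ∩ Set.range c = {c (p - 1), c (p + 1)} := hu
  constructor
  · intro h
    have hmem : c j ∈ G.neighborSet u ∩ Set.range c := ⟨h, ⟨j, rfl⟩⟩
    rw [hu'] at hmem
    rcases hmem with h1 | h1
    · exact Or.inl (hinj h1)
    · exact Or.inr (hinj h1)
  · intro h
    have hmem : c j ∈ ({c (p - 1), c (p + 1)} : Set V) := by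
      rcases h with h | h <;> simp [h]
    rw [← hu'] at hmem
    exact hmem.1
lemma Bi_adj_s7 {V : Type*} {G : SimpleGraph V} {m : ℕ} {c : ZMod m → V}
    (hinj : Function.Injective c) {p : ZMod m} {u : V}
    (hu : u ∈ Bi G m c p) (j : ZMod m) :
    G.Adj u (c j) ↔ j = p := by
  have hu' : G.neighborSet u ∩ Set.range c = {c p} := hu
  constructor
  · intro h
    have hmem : c j ∈ G.neighborSet u ∩ Set.range c := ⟨h, ⟨j, rfl⟩⟩
    rw [hu'] at hmem
    exact hinj hmem
  · intro h
    have hmem : c j ∈ ({c p} : Set V) := by simp [h]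
    rw [← hu'] at hmem
    exact hmem.1

lemma plus_case {V : Type*} (G : SimpleGraph V)
    (hK3 : ¬ContainsInduced graphK3 G) (hX2 : ¬ContainsInduced graphX2 G)
    (hX3 : ¬ContainsInduced graphX3 G)
    (m : ℕ) (c : ZMod m → V) (hm : 10 ≤ m) (hC : IsHoleEmb G m c) (i : ZMod m) :
    (∀ u ∈ Ai G m c (i + 2) ∪ Bi G m c (i + 1),
      ∀ u' ∈ Ai G m c (i + 2) ∪ Bi G m c (i + 1),
      G.neighborSet u ∩ Bi G m c i ⊆ G.neighborSet u' ∩ Bi G m c i ∨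
        G.neighborSet u' ∩ Bi G m c i ⊆ G.neighborSet u ∩ Bi G m c i) ∧
      ∀ u ∈ Ai G m c (i + 2), ∀ u' ∈ Bi G m c (i + 1),
        G.neighborSet u ∩ Bi G m c i ⊆ G.neighborSet u' ∩ Bi G m c i := by
  obtain ⟨-, hinj, hadj⟩ := hC
  have key : ∀ a b : ℤ, a ≠ b → -4 ≤ a → a ≤ 4 → -4 ≤ b → b ≤ 4 →
      i + (a : ZMod m) ≠ i + (b : ZMod m) := by
    intro a b hab h1 h2 h3 h4 h
    exact zmod_ne hm hab h1 h2 h3 h4 (by exact add_left_cancel h)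
  -- adjacency facts among cycle vertices
  have a_ci_c1 : G.Adj (c i) (c (i + 1)) := (hadj _ _).mpr (Or.inl rfl)
  have a_ci_cm : G.Adj (c i) (c (i - 1)) := (hadj _ _).mpr (Or.inr (by ring))
  have n_c1_cm : ¬ G.Adj (c (i + 1)) (c (i - 1)) := by
    intro h
    rcases (hadj _ _).mp h with h | h
    · exact key (-1) 2 (by omega) (by omega) (by omega) (by omega) (by omega)
        (by push_cast; linear_combination h)
    · exact key 1 0 (by omega) (by omega) (by omega) (by omega) (by omega)
        (by push_cast; linear_combination h)
  have n_c3_ci : ¬ G.Adj (c (i + 3)) (c i) := by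
    intro h
    rcases (hadj _ _).mp h with h | h
    · exact key 0 4 (by omega) (by omega) (by omega) (by omega) (by omega)
        (by push_cast; linear_combination h)
    · exact key 3 1 (by omega) (by omega) (by omega) (by omega) (by omega)
        (by push_cast; linear_combination h)
  have n_c3_c1 : ¬ G.Adj (c (i + 3)) (c (i + 1)) := by
    intro h
    rcases (hadj _ _).mp h with h | h
    · exact key 1 4 (by omega) (by omega) (by omega) (by omega) (by omega)
        (by push_cast; linear_combination h)
    · exact key 3 2 (by omega) (by omega) (by omega) (by omega) (by omega)
        (by push_cast; linear_combination h)
  have n_c3_cm : ¬ G.Adj (c (i + 3)) (c (i - 1)) := by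
    intro h
    rcases (hadj _ _).mp h with h | h
    · exact key (-1) 4 (by omega) (by omega) (by omega) (by omega) (by omega)
        (by push_cast; linear_combination h)
    · exact key 3 0 (by omega) (by omega) (by omega) (by omega) (by omega)
        (by push_cast; linear_combination h)
  -- facts about vertices in the upper sets
  have hU : ∀ v ∈ Ai G m c (i + 2) ∪ Bi G m c (i + 1),
      G.Adj v (c (i + 1)) ∧ ¬ G.Adj v (c i) ∧ ¬ G.Adj v (c (i - 1)) := by
    rintro v (hv | hv)
    · refine ⟨(Ai_adj hinj hv (i + 1)).mpr (Or.inl (by ring)), ?_, ?_⟩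
      · intro h
        rcases (Ai_adj hinj hv i).mp h with h | h
        · exact key 0 1 (by omega) (by omega) (by omega) (by omega) (by omega)
            (by push_cast; linear_combination h)
        · exact key 0 3 (by omega) (by omega) (by omega) (by omega) (by omega)
            (by push_cast; linear_combination h)
      · intro h
        rcases (Ai_adj hinj hv (i - 1)).mp h with h | h
        · exact key (-1) 1 (by omega) (by omega) (by omega) (by omega) (by omega)
            (by push_cast; linear_combination h)
        · exact key (-1) 3 (by omega) (by omega) (by omega) (by omega) (by omega)
            (by push_cast; linear_combination h)
    · refine ⟨(Bi_adj_s7 hinj hv (i + 1)).mpr rfl, ?_, ?_⟩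
      · intro h
        exact key 0 1 (by omega) (by omega) (by omega) (by omega) (by omega)
          (by push_cast; linear_combination (Bi_adj_s7 hinj hv i).mp h)
      · intro h
        exact key (-1) 1 (by omega) (by omega) (by omega) (by omega) (by omega)
          (by push_cast; linear_combination (Bi_adj_s7 hinj hv (i - 1)).mp h)
  -- facts about vertices in B_i
  have hW : ∀ w ∈ Bi G m c i,
      G.Adj w (c i) ∧ ¬ G.Adj w (c (i + 1)) ∧ ¬ G.Adj w (c (i - 1)) ∧
        ¬ G.Adj w (c (i + 3)) := by
    intro w hw
    refine ⟨(Bi_adj_s7 hinj hw i).mpr rfl, ?_, ?_, ?_⟩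
    · intro h
      exact key 1 0 (by omega) (by omega) (by omega) (by omega) (by omega)
        (by push_cast; linear_combination (Bi_adj_s7 hinj hw (i + 1)).mp h)
    · intro h
      exact key (-1) 0 (by omega) (by omega) (by omega) (by omega) (by omega)
        (by push_cast; linear_combination (Bi_adj_s7 hinj hw (i - 1)).mp h)
    · intro h
      exact key 3 0 (by omega) (by omega) (by omega) (by omega) (by omega)
        (by push_cast; linear_combination (Bi_adj_s7 hinj hw (i + 3)).mp h)
  -- the "moreover" part, via X2
  have hMore : ∀ u ∈ Ai G m c (i + 2), ∀ u' ∈ Bi G m c (i + 1),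
      G.neighborSet u ∩ Bi G m c i ⊆ G.neighborSet u' ∩ Bi G m c i := by
    intro u hu u' hu' w hw
    obtain ⟨huw, hwB⟩ := hw
    refine ⟨?_, hwB⟩
    by_contra hnadj
    have huw : G.Adj u w := huw
    have hnadj : ¬ G.Adj u' w := hnadj
    obtain ⟨hu1, hu0, hum⟩ := hU u (Or.inl hu)
    obtain ⟨hu'1, hu'0, hu'm⟩ := hU u' (Or.inr hu')
    obtain ⟨hw0, hw1, hwm, hw3⟩ := hW w hwB
    have hu3 : G.Adj u (c (i + 3)) := (Ai_adj hinj hu (i + 3)).mpr (Or.inr (by ring))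
    have hu'3 : ¬ G.Adj u' (c (i + 3)) := by
      intro h
      exact key 3 1 (by omega) (by omega) (by omega) (by omega) (by omega)
        (by push_cast; linear_combination (Bi_adj_s7 hinj hu' (i + 3)).mp h)
    have nuu' : ¬ G.Adj u u' := fun h =>
      no_triangle hK3 h hu'1 hu1
    -- X2 on (c i, c (i+1), u, w, c (i-1), u', c (i+3))
    exact x2_contra hX2 a_ci_c1 hu1.symm huw hw0 a_ci_cm hu'1.symm hu3
      (fun h => hu0 h.symm) (fun h => hu'0 h.symm) (fun h => n_c3_ci h.symm)
      (fun h => hw1 h.symm) n_c1_cm (fun h => n_c3_c1 h.symm)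
      hum nuu' hwm (fun h => hnadj h.symm)
      hw3 (fun h => hu'm h.symm) (fun h => n_c3_cm h.symm) hu'3
  refine ⟨?_, hMore⟩
  intro u hu u' hu'
  by_contra hns
  push_neg at hns
  obtain ⟨hns1, hns2⟩ := hns
  obtain ⟨w, hw, hwn⟩ := Set.not_subset.mp hns1
  obtain ⟨w', hw', hw'n⟩ := Set.not_subset.mp hns2
  obtain ⟨huw, hwB⟩ := hw
  obtain ⟨hu'w', hw'B⟩ := hw'
  have huw : G.Adj u w := huw
  have hu'w' : G.Adj u' w' := hu'w'
  have hnu'w : ¬ G.Adj u' w := fun h => hwn ⟨h, hwB⟩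
  have hnuw' : ¬ G.Adj u w' := fun h => hw'n ⟨h, hw'B⟩
  obtain ⟨hu1, hu0, hum⟩ := hU u hu
  obtain ⟨hu'1, hu'0, hu'm⟩ := hU u' hu'
  obtain ⟨hw0, hw1, hwm, -⟩ := hW w hwB
  obtain ⟨hw'0, hw'1, hw'm, -⟩ := hW w' hw'B
  have nuu' : ¬ G.Adj u u' := fun h => no_triangle hK3 h hu'1 hu1
  have nww' : ¬ G.Adj w w' := fun h => no_triangle hK3 h hw'0 hw0
  -- X3 on (w, u, c (i+1), u', w', c i, c (i-1))
  exact x3_contra hX3 huw.symm hu1 hu'1.symm hu'w' hw0 a_ci_c1.symm hw'0 a_ci_cm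
    hw1 (fun h => hnu'w h.symm) nww' hwm
    nuu' hnuw' hu0 hum
    (fun h => hw'1 h.symm) n_c1_cm
    hu'0 hu'm
    hw'm

lemma hole_neg {V : Type*} {G : SimpleGraph V} {m : ℕ} {c : ZMod m → V}
    (hC : IsHoleEmb G m c) : IsHoleEmb G m (fun j => c (-j)) := by
  obtain ⟨h5, hinj, hadj⟩ := hC
  refine ⟨h5, fun a b h => neg_injective (hinj h), fun a b => ?_⟩
  constructor
  · intro h
    rcases (hadj _ _).mp h with h | h
    · exact Or.inr (by linear_combination h)
    · exact Or.inl (by linear_combination h)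
  · rintro (h | h) <;> apply (hadj _ _).mpr
    · exact Or.inr (by linear_combination h)
    · exact Or.inl (by linear_combination h)

lemma Ai_neg {V : Type*} (G : SimpleGraph V) (m : ℕ) (c : ZMod m → V) (j : ZMod m) :
    Ai G m (fun k => c (-k)) j = Ai G m c (-j) := by
  have hr : Set.range (fun k : ZMod m => c (-k)) = Set.range c := by
    ext x
    constructor
    · rintro ⟨k, rfl⟩; exact ⟨-k, rfl⟩
    · rintro ⟨k, rfl⟩; exact ⟨-k, by simp⟩
  ext v
  show G.neighborSet v ∩ Set.range (fun k : ZMod m => c (-k)) = {c (-(j - 1)), c (-(j + 1))} ↔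
    G.neighborSet v ∩ Set.range c = {c (-j - 1), c (-j + 1)}
  rw [hr, show -(j - 1) = -j + 1 by ring, show -(j + 1) = -j - 1 by ring, Set.pair_comm]

lemma Bi_neg {V : Type*} (G : SimpleGraph V) (m : ℕ) (c : ZMod m → V) (j : ZMod m) :
    Bi G m (fun k => c (-k)) j = Bi G m c (-j) := by
  have hr : Set.range (fun k : ZMod m => c (-k)) = Set.range c := by
    ext x
    constructor
    · rintro ⟨k, rfl⟩; exact ⟨-k, rfl⟩
    · rintro ⟨k, rfl⟩; exact ⟨-k, by simp⟩
  ext v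
  show G.neighborSet v ∩ Set.range (fun k : ZMod m => c (-k)) = {c (-j)} ↔
    G.neighborSet v ∩ Set.range c = {c (-j)}
  rw [hr]


theorem neighborhoods_in_Bi_comparable {V : Type*} (G : SimpleGraph V) (hconn : G.Connected) (hG : AlmostBPG G)
    (m : ℕ) (c : ZMod m → V) (hm : 10 ≤ m) (hC : ShortestHole G m c)
    (i p q : ZMod m)
    (hpq : (p = i - 2 ∧ q = i - 1) ∨ (p = i + 2 ∧ q = i + 1)) :
    (∀ u ∈ Ai G m c p ∪ Bi G m c q, ∀ u' ∈ Ai G m c p ∪ Bi G m c q,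
      G.neighborSet u ∩ Bi G m c i ⊆ G.neighborSet u' ∩ Bi G m c i ∨
        G.neighborSet u' ∩ Bi G m c i ⊆ G.neighborSet u ∩ Bi G m c i) ∧
      ∀ u ∈ Ai G m c p, ∀ u' ∈ Bi G m c q,
        G.neighborSet u ∩ Bi G m c i ⊆ G.neighborSet u' ∩ Bi G m c i := by
  obtain ⟨hK3, -, hX2, hX3, -⟩ := hG
  have hole := hC.1
  rcases hpq with ⟨hp, hq⟩ | ⟨hp, hq⟩
  · subst hp; subst hq
    have H := plus_case G hK3 hX2 hX3 m (fun k => c (-k)) hm (hole_neg hole) (-i)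
    have e1 : Ai G m (fun k => c (-k)) (-i + 2) = Ai G m c (i - 2) := by
      rw [Ai_neg]; congr 1; ring
    have e2 : Bi G m (fun k => c (-k)) (-i + 1) = Bi G m c (i - 1) := by
      rw [Bi_neg]; congr 1; ring
    have e3 : Bi G m (fun k => c (-k)) (-i) = Bi G m c i := by
      rw [Bi_neg]; congr 1; ring
    rw [e1, e2, e3] at H
    exact H
  · subst hp; subst hq
    exact plus_case G hK3 hX2 hX3 m c hm hole i
end
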